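/- arXiv:1609.00488 — 9 statements merged into one kernel-verified Lean document; each statement's English description precedes it below -/
import Mathlib

section
/- Let g : ℝⁿ → ℝⁿ be a C^∞ map and a ∈ ℝⁿ. Define the Jacobian determinant J : ℝⁿ → ℝ by J(t) = det(fderiv ℝ g t) (the determinant of the derivative, viewed as a linear endomorphism of ℝⁿ). If rank(fderiv ℝ g a) + 2 ≤ n (i.e. g has corank at least 2 at a, which forces J(a) = 0), then fderiv ℝ J a = 0. -/
noncomputable section

open Matrix Module

/-- Determinant as a continuous multilinear map in the rows. -/
def detCMLAux (n : ℕ) : ContinuousMultilinearMap ℝ (fun _ : Fin n => (Fin n → ℝ)) ℝ where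
  toMultilinearMap :=
    (Matrix.detRowAlternating : (Fin n → ℝ) [⋀^Fin n]→ₗ[ℝ] ℝ).toMultilinearMap
  cont := by
    have : Continuous fun M : Matrix (Fin n) (Fin n) ℝ => M.det :=
      (continuous_id).matrix_det
    exact this

lemma det_update_eq_zero_aux {n : ℕ} (M : Matrix (Fin n) (Fin n) ℝ)
    (hM : M.rank + 2 ≤ n) (i : Fin n) (w : Fin n → ℝ) :
    Matrix.detRowAlternating (Function.update M i w) = 0 := by
  classical
  apply AlternatingMap.map_linearDependent
  intro hli
  -- restrict to indices different from `i`
  have hinj : Function.Injective (Subtype.val : {j : Fin n // j ≠ i} → Fin n) :=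
    Subtype.val_injective
  have hli' : LinearIndependent ℝ
      (fun j : {j : Fin n // j ≠ i} => Function.update M i w j.1) :=
    hli.comp _ hinj
  have heq : (fun j : {j : Fin n // j ≠ i} => Function.update M i w j.1)
      = fun j : {j : Fin n // j ≠ i} => M j.1 := by
    ext j k
    exact congrFun (Function.update_of_ne j.2 _ _) k
  rw [heq] at hli'
  have hcard : Fintype.card {j : Fin n // j ≠ i} = n - 1 := by
    simp [Fintype.card_subtype_compl]
  have hfr : finrank ℝ (Submodule.span ℝ
      (Set.range fun j : {j : Fin n // j ≠ i} => M j.1)) = n - 1 := by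
    rw [finrank_span_eq_card hli', hcard]
  have hle : Submodule.span ℝ (Set.range fun j : {j : Fin n // j ≠ i} => M j.1)
      ≤ Submodule.span ℝ (Set.range M) := by
    apply Submodule.span_mono
    rintro _ ⟨j, rfl⟩
    exact ⟨j.1, rfl⟩
  have h2 : n - 1 ≤ finrank ℝ (Submodule.span ℝ (Set.range M)) := by
    rw [← hfr]; exact Submodule.finrank_mono hle
  rw [show finrank ℝ (Submodule.span ℝ (Set.range M)) = M.rank from
    M.rank_eq_finrank_span_row.symm] at h2
  omega

/-- Let `g : ℝⁿ → ℝⁿ` be a `C^∞` map and `a ∈ ℝⁿ`. Define the Jacobian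
determinant `J : ℝⁿ → ℝ` by `J t = det (fderiv ℝ g t)` (the determinant of the derivative,
viewed as a linear endomorphism of `ℝⁿ`). If `rank (fderiv ℝ g a) + 2 ≤ n` (i.e. `g` has
corank at least `2` at `a`), then `fderiv ℝ J a = 0`. -/
theorem fderiv_jacobian_det_eq_zero_of_corank_ge_two
    (n : ℕ) (g : EuclideanSpace ℝ (Fin n) → EuclideanSpace ℝ (Fin n))
    (hg : ContDiff ℝ (⊤ : ℕ∞) g) (a : EuclideanSpace ℝ (Fin n))
    (h : Module.finrank ℝ (LinearMap.range (fderiv ℝ g a : EuclideanSpace ℝ (Fin n) →ₗ[ℝ] EuclideanSpace ℝ (Fin n))) + 2 ≤ n) :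
    fderiv ℝ (fun t => LinearMap.det
      ((fderiv ℝ g t : EuclideanSpace ℝ (Fin n) →L[ℝ] EuclideanSpace ℝ (Fin n)) :
        EuclideanSpace ℝ (Fin n) →ₗ[ℝ] EuclideanSpace ℝ (Fin n))) a = 0 := by
  classical
  let b : Basis (Fin n) ℝ (EuclideanSpace ℝ (Fin n)) :=
    (EuclideanSpace.basisFun (Fin n) ℝ).toBasis
  let ψ : (EuclideanSpace ℝ (Fin n) →L[ℝ] EuclideanSpace ℝ (Fin n)) →ₗ[ℝ]
      (Fin n → Fin n → ℝ) :=
    { toFun := fun L => LinearMap.toMatrix b b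
        (L : EuclideanSpace ℝ (Fin n) →ₗ[ℝ] EuclideanSpace ℝ (Fin n))
      map_add' := fun L₁ L₂ => by simp [map_add]; rfl
      map_smul' := fun c L => by simp; rfl }
  let φ : (EuclideanSpace ℝ (Fin n) →L[ℝ] EuclideanSpace ℝ (Fin n)) →L[ℝ]
      (Fin n → Fin n → ℝ) := LinearMap.toContinuousLinearMap ψ
  have hφ : ∀ L : EuclideanSpace ℝ (Fin n) →L[ℝ] EuclideanSpace ℝ (Fin n),
      φ L = LinearMap.toMatrix b b
        (L : EuclideanSpace ℝ (Fin n) →ₗ[ℝ] EuclideanSpace ℝ (Fin n)) := fun L => rfl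
  have hF : DifferentiableAt ℝ (fderiv ℝ g) a :=
    ((hg.fderiv_right (m := (⊤ : ℕ∞)) (by simp)).differentiable (by simp)) a
  have hFφ : DifferentiableAt ℝ (fun t => φ (fderiv ℝ g t)) a :=
    (φ.differentiableAt).comp a hF
  set M : Fin n → Fin n → ℝ := φ (fderiv ℝ g a) with hM
  have hdet : HasFDerivAt (detCMLAux n) ((detCMLAux n).linearDeriv M) M :=
    (detCMLAux n).hasFDerivAt M
  have hcomp : HasFDerivAt (fun t => (detCMLAux n) (φ (fderiv ℝ g t)))
      (((detCMLAux n).linearDeriv M).comp (fderiv ℝ (fun t => φ (fderiv ℝ g t)) a)) a :=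
    hdet.comp a hFφ.hasFDerivAt
  have hJ : (fun t => LinearMap.det
      ((fderiv ℝ g t : EuclideanSpace ℝ (Fin n) →L[ℝ] EuclideanSpace ℝ (Fin n)) :
        EuclideanSpace ℝ (Fin n) →ₗ[ℝ] EuclideanSpace ℝ (Fin n)))
      = fun t => (detCMLAux n) (φ (fderiv ℝ g t)) := by
    funext t
    rw [← LinearMap.det_toMatrix b]
    rfl
  have hrank : (Matrix.of M).rank + 2 ≤ n := by
    have hM' : Matrix.of M = LinearMap.toMatrix b b
        ((fderiv ℝ g a : EuclideanSpace ℝ (Fin n) →L[ℝ] EuclideanSpace ℝ (Fin n)) :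
          EuclideanSpace ℝ (Fin n) →ₗ[ℝ] EuclideanSpace ℝ (Fin n)) := rfl
    rw [hM', Matrix.rank_eq_finrank_range_toLin _ b b, Matrix.toLin_toMatrix]
    exact h
  have hzero : (detCMLAux n).linearDeriv M = 0 := by
    ext w
    rw [ContinuousMultilinearMap.linearDeriv_apply]
    have hterm : ∀ i : Fin n, (detCMLAux n) (Function.update M i (w i)) = 0 := fun i =>
      det_update_eq_zero_aux (Matrix.of M) hrank i (w i)
    simp only [hterm, Finset.sum_const_zero, ContinuousLinearMap.zero_apply]
  rw [hJ, hcomp.fderiv, hzero, ContinuousLinearMap.zero_comp]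
end
end

section
/- Let U, U' ⊆ ℝⁿ be open, f : U → ℝ^m a C^∞ map (n ≤ m), and T : U' → U a C^∞ diffeomorphism. Let h₁, …, h_n : U → ℝ^m and k₁, …, k_n : U' → ℝ^m be smooth maps which are linearly independent at every point, and suppose that span{k₁(s), …, k_n(s)} = span{h₁(T(s)), …, h_n(T(s))} for every s ∈ U'. If σ : U → ℝ is a signed area density function of f relative to (h₁, …, h_n) and σ̃ : U' → ℝ is a signed area density function of f ∘ T relative to (k₁, …, k_n), then there exists a smooth nowhere-vanishing function c : U' → ℝ such that σ̃(s) = c(s) · σ(T(s)) for every s ∈ U'. In particular, the signed area density function of a frontal is well defined up to 𝒦-equivalence, independently of the choice of frame and of coordinates on the source. -/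
noncomputable section

open Set

/-- determinant of a matrix with smooth entries is smooth -/
lemma aux_det_contDiffOn {X : Type*} [NormedAddCommGroup X] [NormedSpace ℝ X]
    {nn : ℕ} {s : Set X} {A : X → Matrix (Fin nn) (Fin nn) ℝ}
    (h : ∀ i j, ContDiffOn ℝ (⊤ : ℕ∞) (fun x => A x i j) s) :
    ContDiffOn ℝ (⊤ : ℕ∞) (fun x => (A x).det) s := by
  simp_rw [Matrix.det_apply]
  apply ContDiffOn.sum
  intro σ _
  simp_rw [Units.smul_def, zsmul_eq_mul]
  exact (contDiffOn_const).mul <| contDiffOn_prod fun i _ => h (σ i) i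

/-- nonvanishing of the mixed Gram determinant -/
lemma aux_gram_ne_zero {mm nn : ℕ} (u v : Fin nn → EuclideanSpace ℝ (Fin mm))
    (hu : LinearIndependent ℝ u)
    (hsp : Submodule.span ℝ (Set.range u) = Submodule.span ℝ (Set.range v)) :
    (Matrix.of fun j i => (inner ℝ (u i) (v j) : ℝ)).det ≠ 0 := by
  intro hdet
  obtain ⟨x, hx0, hx⟩ := (Matrix.exists_mulVec_eq_zero_iff).2 hdet
  set w : EuclideanSpace ℝ (Fin mm) := ∑ i, x i • u i with hw
  have hwv : ∀ j, (inner ℝ w (v j) : ℝ) = 0 := by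
    intro j
    have hx' := congrFun hx j
    rw [Pi.zero_apply] at hx'
    rw [hw, sum_inner]
    simp only [real_inner_smul_left]
    rw [← hx']
    simp only [Matrix.mulVec, dotProduct, Matrix.of_apply]
    exact Finset.sum_congr rfl fun i _ => mul_comm _ _
  have hwmem : w ∈ Submodule.span ℝ (Set.range v) := by
    rw [← hsp, hw]
    exact Submodule.sum_mem _ fun i _ => Submodule.smul_mem _ _
      (Submodule.subset_span ⟨i, rfl⟩)
  obtain ⟨c, hc⟩ := (Submodule.mem_span_range_iff_exists_fun ℝ).1 hwmem
  have hww : (inner ℝ w w : ℝ) = 0 := by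
    nth_rewrite 2 [← hc]
    rw [inner_sum]
    simp only [real_inner_smul_right, hwv, mul_zero, Finset.sum_const_zero]
  have hw0 : w = 0 := by rwa [inner_self_eq_zero] at hww
  exact hx0 (funext fun i => Fintype.linearIndependent_iff.1 hu x (hw0 ▸ hw.symm) i)

/-- Jacobian determinant of a map `T` in standard coordinates. -/
def auxJac (n : ℕ) (T : EuclideanSpace ℝ (Fin n) → EuclideanSpace ℝ (Fin n))
    (s : EuclideanSpace ℝ (Fin n)) : ℝ :=
  (Matrix.of fun i j : Fin n => fderiv ℝ T s (EuclideanSpace.single j (1 : ℝ)) i).det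

/-- mixed Gram determinant -/
def auxGram {n m : ℕ} (u v : Fin n → EuclideanSpace ℝ (Fin m)) : ℝ :=
  (Matrix.of fun j i => (inner ℝ (u i) (v j) : ℝ)).det


/-- Invariance of the signed area density up to `𝒦`-equivalence.
Let `U, U' ⊆ ℝⁿ` be open, `f : U → ℝ^m` a `C^∞` map (`n ≤ m`), and `T : U' → U` a `C^∞`
diffeomorphism (with smooth inverse `S`).  Let `(h₁, …, h_n)` and `(k₁, …, k_n)` be smooth
pointwise linearly independent frames on `U` and `U'` respectively satisfying
`span{k₁(s), …, k_n(s)} = span{h₁(T s), …, h_n(T s)}` for every `s ∈ U'`.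
If `σ` is a signed area density of `f` relative to `(h_i)` and `σ̃` is a signed area density
of `f ∘ T` relative to `(k_i)`, then there is a smooth nowhere-vanishing `c : U' → ℝ` with
`σ̃ s = c s * σ (T s)` for all `s ∈ U'`.  (Lemma 5.2 of the paper.) -/

theorem density_kEquivalent_of_change_of_frame_and_coordinates
    (n m : ℕ) (hnm : n ≤ m)
    (U U' : Set (EuclideanSpace ℝ (Fin n))) (hU : IsOpen U) (hU' : IsOpen U')
    (f : EuclideanSpace ℝ (Fin n) → EuclideanSpace ℝ (Fin m))
    (hf : ContDiffOn ℝ (⊤ : ℕ∞) f U)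
    (T S : EuclideanSpace ℝ (Fin n) → EuclideanSpace ℝ (Fin n))
    (hT : ContDiffOn ℝ (⊤ : ℕ∞) T U') (hS : ContDiffOn ℝ (⊤ : ℕ∞) S U)
    (hTU : Set.MapsTo T U' U) (hSU : Set.MapsTo S U U')
    (hST : ∀ s ∈ U', S (T s) = s) (hTS : ∀ t ∈ U, T (S t) = t)
    (h k : Fin n → EuclideanSpace ℝ (Fin n) → EuclideanSpace ℝ (Fin m))
    (hh : ∀ i, ContDiffOn ℝ (⊤ : ℕ∞) (h i) U)
    (hk : ∀ i, ContDiffOn ℝ (⊤ : ℕ∞) (k i) U')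
    (hhli : ∀ t ∈ U, LinearIndependent ℝ (fun i => h i t))
    (hkli : ∀ s ∈ U', LinearIndependent ℝ (fun i => k i s))
    (hspan : ∀ s ∈ U',
      Submodule.span ℝ (Set.range fun i => k i s)
        = Submodule.span ℝ (Set.range fun i => h i (T s)))
    (σ : EuclideanSpace ℝ (Fin n) → ℝ) (hσ : ContDiffOn ℝ (⊤ : ℕ∞) σ U)
    (hσdens : ∀ t ∈ U,
      ExteriorAlgebra.ιMulti ℝ n
          (fun i => fderiv ℝ f t (EuclideanSpace.single i (1 : ℝ)))
        = σ t • ExteriorAlgebra.ιMulti ℝ n (fun i => h i t))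
    (σ' : EuclideanSpace ℝ (Fin n) → ℝ) (hσ' : ContDiffOn ℝ (⊤ : ℕ∞) σ' U')
    (hσ'dens : ∀ s ∈ U',
      ExteriorAlgebra.ιMulti ℝ n
          (fun i => fderiv ℝ (f ∘ T) s (EuclideanSpace.single i (1 : ℝ)))
        = σ' s • ExteriorAlgebra.ιMulti ℝ n (fun i => k i s)) :
    ∃ c : EuclideanSpace ℝ (Fin n) → ℝ,
      ContDiffOn ℝ (⊤ : ℕ∞) c U' ∧ (∀ s ∈ U', c s ≠ 0) ∧
      (∀ s ∈ U', σ' s = c s * σ (T s)) := by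
    classical
  set e : Module.Basis (Fin n) ℝ (EuclideanSpace ℝ (Fin n)) :=
    (EuclideanSpace.basisFun (Fin n) ℝ).toBasis with he
  have hei : ∀ i, e i = EuclideanSpace.single i (1 : ℝ) := by
    intro i; rw [he, OrthonormalBasis.coe_toBasis, EuclideanSpace.basisFun_apply]
  -- notation for the three determinant functions
  set Gd : EuclideanSpace ℝ (Fin n) → ℝ :=
    fun s => auxGram (fun i => h i (T s)) (fun j => h j (T s)) with hGd
  set Qd : EuclideanSpace ℝ (Fin n) → ℝ :=
    fun s => auxGram (fun i => h i (T s)) (fun j => k j s) with hQd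
  -- nonvanishing
  have hGne : ∀ s ∈ U', Gd s ≠ 0 := fun s hs =>
    aux_gram_ne_zero _ _ (hhli _ (hTU hs)) rfl
  have hQne : ∀ s ∈ U', Qd s ≠ 0 := fun s hs =>
    aux_gram_ne_zero _ _ (hhli _ (hTU hs)) (hspan s hs).symm
  -- differentiability facts
  have hdT : ∀ s ∈ U', DifferentiableAt ℝ T s := fun s hs =>
    (hT.contDiffAt (hU'.mem_nhds hs)).differentiableAt
      (by simp)
  have hdS : ∀ t ∈ U, DifferentiableAt ℝ S t := fun t ht =>
    (hS.contDiffAt (hU.mem_nhds ht)).differentiableAt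
      (by simp)
  have hdf : ∀ t ∈ U, DifferentiableAt ℝ f t := fun t ht =>
    (hf.contDiffAt (hU.mem_nhds ht)).differentiableAt
      (by simp)
  -- the Jacobian matrix is the matrix of `fderiv T s` in the basis `e`
  have hJacMat : ∀ s : EuclideanSpace ℝ (Fin n),
      auxJac n T s = ((LinearMap.toMatrix e e) (fderiv ℝ T s).toLinearMap).det := by
    intro s
    unfold auxJac
    congr 1
  -- nonvanishing of the Jacobian
  have hJne : ∀ s ∈ U', auxJac n T s ≠ 0 := by
    intro s hs
    have hid : fderiv ℝ (S ∘ T) s = ContinuousLinearMap.id ℝ _ := by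
      have hev : S ∘ T =ᶠ[nhds s] id :=
        Filter.eventuallyEq_of_mem (hU'.mem_nhds hs) hST
      rw [hev.fderiv_eq, fderiv_id]
    have hcomp : (fderiv ℝ S (T s)).comp (fderiv ℝ T s)
        = ContinuousLinearMap.id ℝ _ :=
      (fderiv_comp s (hdS _ (hTU hs)) (hdT s hs)).symm.trans hid
    have hmul : (LinearMap.toMatrix e e) ((fderiv ℝ S (T s)).toLinearMap)
        * (LinearMap.toMatrix e e) ((fderiv ℝ T s).toLinearMap) = 1 := by
      rw [← LinearMap.toMatrix_comp e e e]
      have : ((fderiv ℝ S (T s)).toLinearMap.comp (fderiv ℝ T s).toLinearMap)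
          = (LinearMap.id : EuclideanSpace ℝ (Fin n) →ₗ[ℝ] _) := by
        rw [← ContinuousLinearMap.toLinearMap_comp, hcomp]; rfl
      rw [this, LinearMap.toMatrix_id]
    have hdet : ((LinearMap.toMatrix e e) ((fderiv ℝ S (T s)).toLinearMap)).det
        * ((LinearMap.toMatrix e e) ((fderiv ℝ T s).toLinearMap)).det = 1 := by
      rw [← Matrix.det_mul, hmul, Matrix.det_one]
    rw [hJacMat s]
    exact right_ne_zero_of_mul_eq_one hdet
  -- the key pointwise identity
  have hkey : ∀ s ∈ U', σ' s * Qd s = σ (T s) * Gd s * auxJac n T s := by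
    intro s hs
    have ht : T s ∈ U := hTU hs
    set u : Fin n → EuclideanSpace ℝ (Fin m) := fun i => h i (T s) with hu
    set P : EuclideanSpace ℝ (Fin m) →ₗ[ℝ] (Fin n → ℝ) :=
      LinearMap.pi (fun i => (innerSL ℝ (u i)).toLinearMap) with hP
    set φ : (EuclideanSpace ℝ (Fin m)) [⋀^Fin n]→ₗ[ℝ] ℝ :=
      Matrix.detRowAlternating.compLinearMap P with hφdef
    have hφ : ∀ v : Fin n → EuclideanSpace ℝ (Fin m),
        φ v = (Matrix.of fun j i => (inner ℝ (u i) (v j) : ℝ)).det := fun v => rfl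
    set fam : ∀ i : ℕ, (EuclideanSpace ℝ (Fin m)) [⋀^Fin i]→ₗ[ℝ] ℝ :=
      Function.update (fun _ => 0) n φ with hfam
    set L := ExteriorAlgebra.liftAlternating (R := ℝ) fam with hLdef
    have hL : ∀ v : Fin n → EuclideanSpace ℝ (Fin m),
        L (ExteriorAlgebra.ιMulti ℝ n v) = φ v := by
      intro v
      rw [hLdef, ExteriorAlgebra.liftAlternating_apply_ιMulti, hfam,
        Function.update_self]
    -- equation 1 : at the point T s
    have e1 : φ (fun i => fderiv ℝ f (T s) (EuclideanSpace.single i (1 : ℝ)))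
        = σ (T s) * Gd s := by
      have := congrArg L (hσdens (T s) ht)
      rw [map_smul, hL, hL, smul_eq_mul] at this
      rw [this]
      congr 1
    -- equation 2 : at s
    have e2 : φ (fun i => fderiv ℝ (f ∘ T) s (EuclideanSpace.single i (1 : ℝ)))
        = σ' s * Qd s := by
      have := congrArg L (hσ'dens s hs)
      rw [map_smul, hL, hL, smul_eq_mul] at this
      rw [this]
      congr 1
    -- chain rule
    have hchain : fderiv ℝ (f ∘ T) s = (fderiv ℝ f (T s)).comp (fderiv ℝ T s) :=
      fderiv_comp s (hdf _ ht) (hdT s hs)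
    -- pull back by the derivative of f
    set ψ : (EuclideanSpace ℝ (Fin n)) [⋀^Fin n]→ₗ[ℝ] ℝ :=
      φ.compLinearMap (fderiv ℝ f (T s)).toLinearMap with hψdef
    have e4 := ψ.eq_smul_basis_det e
    have e5 := DFunLike.congr_fun e4 (fun i => fderiv ℝ T s (e i))
    rw [AlternatingMap.smul_apply, smul_eq_mul] at e5
    -- identify the pieces of e5
    have lhs5 : ψ (fun i => fderiv ℝ T s (e i))
        = φ (fun i => fderiv ℝ (f ∘ T) s (EuclideanSpace.single i (1 : ℝ))) := by
      rw [hψdef, AlternatingMap.compLinearMap_apply]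
      congr 1
      funext i
      rw [hchain, ContinuousLinearMap.comp_apply, hei i]
      rfl
    have base5 : ψ e = φ (fun i => fderiv ℝ f (T s) (EuclideanSpace.single i (1 : ℝ))) := by
      rw [hψdef, AlternatingMap.compLinearMap_apply]
      congr 1
      funext i
      rw [hei i]
      rfl
    have det5 : e.det (fun i => fderiv ℝ T s (e i)) = auxJac n T s := by
      rw [Module.Basis.det_apply, hJacMat s]
      congr 1
      ext i j
      rw [Module.Basis.toMatrix_apply, LinearMap.toMatrix_apply]
      rfl
    rw [lhs5, base5, det5, e2, e1] at e5
    exact e5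
  -- smoothness of the three determinant functions on U'
  have hTfd : ContDiffOn ℝ (⊤ : ℕ∞) (fderiv ℝ T) U' := by
    apply hT.fderiv_of_isOpen hU'
    exact le_of_eq rfl
  have hJsm : ContDiffOn ℝ (⊤ : ℕ∞) (auxJac n T) U' := by
    apply aux_det_contDiffOn
    intro i j
    exact (EuclideanSpace.proj i : EuclideanSpace ℝ (Fin n) →L[ℝ] ℝ).contDiff.comp_contDiffOn
      (hTfd.clm_apply contDiffOn_const)
  have hGsm : ContDiffOn ℝ (⊤ : ℕ∞) Gd U' := by
    apply aux_det_contDiffOn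
    intro i j
    exact ((hh j).comp hT hTU).inner ℝ ((hh i).comp hT hTU)
  have hQsm : ContDiffOn ℝ (⊤ : ℕ∞) Qd U' := by
    apply aux_det_contDiffOn
    intro i j
    exact ((hh j).comp hT hTU).inner ℝ (hk i)
  -- conclusion
  refine ⟨fun s => auxJac n T s * Gd s / Qd s, ?_, ?_, ?_⟩
  · exact (hJsm.mul hGsm).div hQsm hQne
  · exact fun s hs => div_ne_zero (mul_ne_zero (hJne s hs) (hGne s hs)) (hQne s hs)
  · intro s hs
    have hk' := hkey s hs
    field_simp [hQne s hs]
    linarith [hk']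
end
end

section
/- Let U, U' ⊆ ℝⁿ be open and W, W' ⊆ ℝ^m be open, with n ≤ m. Let f : U → ℝ^m be a C^∞ map with f(U) ⊆ W which is a frontal at a point a ∈ U. Let φ : U' → U be a C^∞ diffeomorphism and Φ : W → W' a C^∞ diffeomorphism. Then the composite g = Φ ∘ f ∘ φ : U' → ℝ^m is a frontal at the point a' = φ⁻¹(a). In particular, being a frontal is invariant under right-left (𝒜-) equivalence. -/
set_option maxHeartbeats 1000000


noncomputable section

open Set

/-- A `C^∞` map `f : U → ℝ^m` (with `U ⊆ ℝⁿ` open, `n ≤ m`) is a *frontal* at `a ∈ U` if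
on some open neighbourhood `V ⊆ U` of `a` there are smooth maps `h₁, …, h_n : V → ℝ^m`,
linearly independent at every point of `V`, whose pointwise span contains the range of the
derivative of `f`. -/
def IsFrontalAt (n m : ℕ) (U : Set (EuclideanSpace ℝ (Fin n)))
    (f : EuclideanSpace ℝ (Fin n) → EuclideanSpace ℝ (Fin m))
    (a : EuclideanSpace ℝ (Fin n)) : Prop :=
  ∃ V : Set (EuclideanSpace ℝ (Fin n)), IsOpen V ∧ a ∈ V ∧ V ⊆ U ∧
    ∃ h : Fin n → EuclideanSpace ℝ (Fin n) → EuclideanSpace ℝ (Fin m),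
      (∀ i, ContDiffOn ℝ (⊤ : ℕ∞) (h i) V) ∧
      (∀ t ∈ V, LinearIndependent ℝ (fun i => h i t)) ∧
      (∀ t ∈ V, LinearMap.range ((fderiv ℝ f t : EuclideanSpace ℝ (Fin n) →ₗ[ℝ] EuclideanSpace ℝ (Fin m))) ≤
        Submodule.span ℝ (Set.range fun i => h i t))

/-- Being a frontal is invariant under right-left (`𝒜`-) equivalence:
if `f : U → ℝ^m` is `C^∞` with `f (U) ⊆ W`, `f` is a frontal at `a ∈ U`,
`φ : U' → U` is a `C^∞` diffeomorphism (with smooth inverse `ψ`) and `Φ : W → W'` is a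
`C^∞` diffeomorphism (with smooth inverse `Ψ`), then `g = Φ ∘ f ∘ φ` is a frontal at
`a' = φ⁻¹ a`.  (Proposition 4.2 of the paper.) -/
theorem isFrontalAt_comp_diffeos
    (n m : ℕ) (hnm : n ≤ m)
    (U U' : Set (EuclideanSpace ℝ (Fin n))) (hU : IsOpen U) (hU' : IsOpen U')
    (W W' : Set (EuclideanSpace ℝ (Fin m))) (hW : IsOpen W) (hW' : IsOpen W')
    (f : EuclideanSpace ℝ (Fin n) → EuclideanSpace ℝ (Fin m))
    (hf : ContDiffOn ℝ (⊤ : ℕ∞) f U) (hfW : Set.MapsTo f U W)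
    (φ ψ : EuclideanSpace ℝ (Fin n) → EuclideanSpace ℝ (Fin n))
    (hφ : ContDiffOn ℝ (⊤ : ℕ∞) φ U') (hψ : ContDiffOn ℝ (⊤ : ℕ∞) ψ U)
    (hφU : Set.MapsTo φ U' U) (hψU : Set.MapsTo ψ U U')
    (hψφ : ∀ s ∈ U', ψ (φ s) = s) (hφψ : ∀ t ∈ U, φ (ψ t) = t)
    (Φ Ψ : EuclideanSpace ℝ (Fin m) → EuclideanSpace ℝ (Fin m))
    (hΦ : ContDiffOn ℝ (⊤ : ℕ∞) Φ W) (hΨ : ContDiffOn ℝ (⊤ : ℕ∞) Ψ W')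
    (hΦW : Set.MapsTo Φ W W') (hΨW : Set.MapsTo Ψ W' W)
    (hΨΦ : ∀ x ∈ W, Ψ (Φ x) = x) (hΦΨ : ∀ y ∈ W', Φ (Ψ y) = y)
    (a a' : EuclideanSpace ℝ (Fin n)) (ha : a ∈ U) (ha' : a' ∈ U') (haa' : φ a' = a)
    (hfront : IsFrontalAt n m U f a) :
    IsFrontalAt n m U' (fun s => Φ (f (φ s))) a' := by
  obtain ⟨V, hVopen, haV, hVU, h, hsm, hli, hspan⟩ := hfront
  have key : ∀ s, s ∈ U' → φ s ∈ V →
      Function.Injective (fderiv ℝ Φ (f (φ s))) ∧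
      fderiv ℝ (fun s => Φ (f (φ s))) s =
        ((fderiv ℝ Φ (f (φ s))).comp (fderiv ℝ f (φ s))).comp (fderiv ℝ φ s) := by
    intro s hs' htV
    have htU : φ s ∈ U := hVU htV
    have hxW : f (φ s) ∈ W := hfW htU
    have hdφ : DifferentiableAt ℝ φ s :=
      (hφ.contDiffAt (hU'.mem_nhds hs')).differentiableAt (by simp)
    have hdf : DifferentiableAt ℝ f (φ s) :=
      (hf.contDiffAt (hU.mem_nhds htU)).differentiableAt (by simp)
    have hdΦ : DifferentiableAt ℝ Φ (f (φ s)) :=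
      (hΦ.contDiffAt (hW.mem_nhds hxW)).differentiableAt (by simp)
    have hdΨ : DifferentiableAt ℝ Ψ (Φ (f (φ s))) :=
      (hΨ.contDiffAt (hW'.mem_nhds (hΦW hxW))).differentiableAt (by simp)
    constructor
    · have h1 : (Ψ ∘ Φ) =ᶠ[nhds (f (φ s))] id :=
        Filter.eventuallyEq_of_mem (hW.mem_nhds hxW) (fun y hy => hΨΦ y hy)
      have hid : fderiv ℝ (Ψ ∘ Φ) (f (φ s)) = ContinuousLinearMap.id ℝ _ := by
        rw [h1.fderiv_eq, fderiv_id]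
      have hcomp : fderiv ℝ (Ψ ∘ Φ) (f (φ s)) =
          (fderiv ℝ Ψ (Φ (f (φ s)))).comp (fderiv ℝ Φ (f (φ s))) :=
        fderiv_comp _ hdΨ hdΦ
      intro u v huv
      have h2 := congrArg (fun L : EuclideanSpace ℝ (Fin m) →L[ℝ] EuclideanSpace ℝ (Fin m)
        => L u = L v) (hcomp.symm.trans hid)
      simpa [ContinuousLinearMap.comp_apply, huv] using h2
    · have e2 : fderiv ℝ (f ∘ φ) s = (fderiv ℝ f (φ s)).comp (fderiv ℝ φ s) :=
        fderiv_comp _ hdf hdφ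
      show fderiv ℝ (Φ ∘ (f ∘ φ)) s = _
      rw [fderiv_comp s hdΦ (hdf.comp s hdφ), e2, ContinuousLinearMap.comp_assoc]
      rfl
  -- the new neighbourhood
  refine ⟨U' ∩ φ ⁻¹' V, hφ.continuousOn.isOpen_inter_preimage hU' hVopen,
    ⟨ha', by simp [haa', haV]⟩, inter_subset_left,
    fun i s => fderiv ℝ Φ (f (φ s)) (h i (φ s)), ?_, ?_, ?_⟩
  · -- smoothness of the new frame
    intro i
    have hDΦ : ContDiffOn ℝ (⊤ : ℕ∞) (fun x => fderiv ℝ Φ x) W :=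
      (hΦ.fderivWithin hW.uniqueDiffOn (by exact_mod_cast le_top)).congr
        (fun x hx => (fderivWithin_of_isOpen hW hx).symm)
    have hfφ : ContDiffOn ℝ (⊤ : ℕ∞) (fun s => f (φ s)) U' := hf.comp hφ hφU
    have hA : ContDiffOn ℝ (⊤ : ℕ∞) (fun s => fderiv ℝ Φ (f (φ s))) (U' ∩ φ ⁻¹' V) :=
      hDΦ.comp (hfφ.mono inter_subset_left) (fun s hs => hfW (hφU hs.1))
    have hB : ContDiffOn ℝ (⊤ : ℕ∞) (fun s => h i (φ s)) (U' ∩ φ ⁻¹' V) :=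
      (hsm i).comp (hφ.mono inter_subset_left) (fun s hs => hs.2)
    exact hA.clm_apply hB
  · -- linear independence
    intro s hs
    exact (hli (φ s) hs.2).map' (fderiv ℝ Φ (f (φ s)) : EuclideanSpace ℝ (Fin m) →ₗ[ℝ] EuclideanSpace ℝ (Fin m))
      ((LinearMap.ker_eq_bot (f := (fderiv ℝ Φ (f (φ s)) : EuclideanSpace ℝ (Fin m) →ₗ[ℝ] EuclideanSpace ℝ (Fin m)))).mpr (key s hs.1 hs.2).1)
  · -- span containment
    intro s hs
    rintro v ⟨u, rfl⟩
    rw [(key s hs.1 hs.2).2]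
    have hmem : fderiv ℝ f (φ s) (fderiv ℝ φ s u) ∈
        Submodule.span ℝ (Set.range fun i => h i (φ s)) :=
      hspan (φ s) hs.2 ⟨fderiv ℝ φ s u, rfl⟩
    have hm2 : fderiv ℝ Φ (f (φ s)) (fderiv ℝ f (φ s) (fderiv ℝ φ s u)) ∈
        Submodule.map (fderiv ℝ Φ (f (φ s)) : _ →ₗ[ℝ] _)
          (Submodule.span ℝ (Set.range fun i => h i (φ s))) :=
      Submodule.mem_map_of_mem hmem
    rw [Submodule.map_span] at hm2
    simpa [ContinuousLinearMap.comp_apply, ← Set.range_comp, Function.comp_def] using hm2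
end
end

section
/- Let U ⊆ ℝⁿ be open, n ≤ m, and f : U → ℝ^m a C^∞ map whose regular locus R(f) = {t ∈ U : fderiv ℝ f t is injective} is dense in U. Let h₁, …, h_n : U → ℝ^m and k₁, …, k_n : U → ℝ^m be smooth maps which are linearly independent at every point of U and satisfy range(fderiv ℝ f t) ⊆ span{h₁(t), …, h_n(t)} and range(fderiv ℝ f t) ⊆ span{k₁(t), …, k_n(t)} for every t ∈ U. Then span{h₁(t), …, h_n(t)} = span{k₁(t), …, k_n(t)} for every t ∈ U. (Uniqueness of the Legendre lift of a proper frontal.) -/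
noncomputable section

open Set

/-- Gram determinant criterion for linear independence in a Euclidean space. -/
theorem gram_det_ne_zero_iff {m N : ℕ} (v : Fin N → EuclideanSpace ℝ (Fin m)) :
    LinearIndependent ℝ v ↔
      (Matrix.of fun i j => inner ℝ (v i) (v j) : Matrix (Fin N) (Fin N) ℝ).det ≠ 0 := by
  have hinner : ∀ (c : Fin N → ℝ) (a : Fin N),
      (inner ℝ (v a) (∑ j, c j • v j) : ℝ)
        = (Matrix.of fun i j => (inner ℝ (v i) (v j) : ℝ)).mulVec c a := by
    intro c a
    simp only [inner_sum, real_inner_smul_right, Matrix.mulVec, dotProduct,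
      Matrix.of_apply]
    exact Finset.sum_congr rfl fun j _ => mul_comm _ _
  constructor
  · intro hli hdet
    obtain ⟨c, hc0, hc⟩ := Matrix.exists_mulVec_eq_zero_iff.mpr hdet
    have hs : (∑ i, c i • v i) = 0 := by
      have h1 : (inner ℝ (∑ i, c i • v i) (∑ i, c i • v i) : ℝ) = 0 := by
        rw [sum_inner]
        simp only [real_inner_smul_left, hinner c, hc, Pi.zero_apply, mul_zero,
          Finset.sum_const_zero]
      exact inner_self_eq_zero.mp h1
    have := (Fintype.linearIndependent_iff.mp hli) c hs
    exact hc0 (funext this)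
  · intro hdet
    rw [Fintype.linearIndependent_iff]
    intro c hc i
    by_contra hci
    apply hdet
    rw [← Matrix.exists_mulVec_eq_zero_iff]
    refine ⟨c, fun h => hci (congrFun h i), ?_⟩
    funext a
    rw [Pi.zero_apply, ← hinner c a, hc, inner_zero_right]

theorem span_le_aux
    (n m : ℕ)
    (U : Set (EuclideanSpace ℝ (Fin n))) (hU : IsOpen U)
    (f : EuclideanSpace ℝ (Fin n) → EuclideanSpace ℝ (Fin m))
    (hdense : U ⊆ closure {t ∈ U | Function.Injective (fderiv ℝ f t)})
    (h k : Fin n → EuclideanSpace ℝ (Fin n) → EuclideanSpace ℝ (Fin m))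
    (hh : ∀ i, ContDiffOn ℝ (⊤ : ℕ∞) (h i) U)
    (hk : ∀ i, ContDiffOn ℝ (⊤ : ℕ∞) (k i) U)
    (hhli : ∀ t ∈ U, LinearIndependent ℝ (fun i => h i t))
    (hkli : ∀ t ∈ U, LinearIndependent ℝ (fun i => k i t))
    (hhspan : ∀ t ∈ U, LinearMap.range
        (fderiv ℝ f t : EuclideanSpace ℝ (Fin n) →ₗ[ℝ] EuclideanSpace ℝ (Fin m)) ≤
      Submodule.span ℝ (Set.range fun i => h i t))
    (hkspan : ∀ t ∈ U, LinearMap.range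
        (fderiv ℝ f t : EuclideanSpace ℝ (Fin n) →ₗ[ℝ] EuclideanSpace ℝ (Fin m)) ≤
      Submodule.span ℝ (Set.range fun i => k i t)) :
    ∀ t ∈ U, Submodule.span ℝ (Set.range fun i => k i t)
      ≤ Submodule.span ℝ (Set.range fun i => h i t) := by
  -- On the regular locus, both spans equal the range of the derivative.
  set S := {t ∈ U | Function.Injective (fderiv ℝ f t)} with hS
  have key : ∀ t ∈ S, ∀ i, k i t ∈ Submodule.span ℝ (Set.range fun i => h i t) := by
    intro t ht i
    have hinj := ht.2
    have hrange : Module.finrank ℝ (LinearMap.range (fderiv ℝ f t : EuclideanSpace ℝ (Fin n) →ₗ[ℝ] EuclideanSpace ℝ (Fin m))) = n := by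
      have := LinearMap.finrank_range_of_inj
        (f := ((fderiv ℝ f t : EuclideanSpace ℝ (Fin n) →L[ℝ] EuclideanSpace ℝ (Fin m)) :
          EuclideanSpace ℝ (Fin n) →ₗ[ℝ] EuclideanSpace ℝ (Fin m))) hinj
      rw [finrank_euclideanSpace_fin] at this
      exact this
    have hspanh : Module.finrank ℝ (Submodule.span ℝ (Set.range fun i => h i t)) = n := by
      rw [finrank_span_eq_card (hhli t ht.1), Fintype.card_fin]
    have heq : LinearMap.range (fderiv ℝ f t : EuclideanSpace ℝ (Fin n) →ₗ[ℝ] EuclideanSpace ℝ (Fin m))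
        = Submodule.span ℝ (Set.range fun i => h i t) := by
      apply Submodule.eq_of_le_of_finrank_le (hhspan t ht.1)
      rw [hrange, hspanh]
    have hspank : Module.finrank ℝ (Submodule.span ℝ (Set.range fun i => k i t)) = n := by
      rw [finrank_span_eq_card (hkli t ht.1), Fintype.card_fin]
    have heqk : LinearMap.range (fderiv ℝ f t : EuclideanSpace ℝ (Fin n) →ₗ[ℝ] EuclideanSpace ℝ (Fin m))
        = Submodule.span ℝ (Set.range fun i => k i t) := by
      apply Submodule.eq_of_le_of_finrank_le (hkspan t ht.1)
      rw [hrange, hspank]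
    rw [← heq, heqk]
    exact Submodule.subset_span ⟨i, rfl⟩
  intro t ht
  rw [Submodule.span_le]
  rintro _ ⟨j, rfl⟩
  -- Gram determinant of the snoc family vanishes on S, hence on U by continuity.
  set w : EuclideanSpace ℝ (Fin n) → Fin (n + 1) → EuclideanSpace ℝ (Fin m) :=
    fun s => Fin.snoc (fun i => h i s) (k j s) with hw
  set g : EuclideanSpace ℝ (Fin n) → ℝ :=
    fun s => (Matrix.of fun a b => (inner ℝ (w s a) (w s b) : ℝ)).det with hg
  have hwc : ∀ a, ContinuousOn (fun s => w s a) U := by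
    intro a
    refine Fin.lastCases ?_ ?_ a
    · simpa [hw] using (hk j).continuousOn
    · intro i; simpa [hw] using (hh i).continuousOn
  have hgc : ContinuousOn g U := by
    have hdetc : Continuous (fun M : Matrix (Fin (n+1)) (Fin (n+1)) ℝ => M.det) :=
      Continuous.matrix_det continuous_id
    apply hdetc.comp_continuousOn
    apply continuousOn_pi.2
    intro a
    apply continuousOn_pi.2
    intro b
    exact (hwc a).inner (hwc b)
  have hgS : ∀ s ∈ S, g s = 0 := by
    intro s hs
    by_contra hne
    have hli : LinearIndependent ℝ (w s) := (gram_det_ne_zero_iff (w s)).mpr hne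
    rw [hw, linearIndependent_fin_snoc] at hli
    exact hli.2 (key s hs j)
  have hgt : g t = 0 := by
    have hca : ContinuousAt g t := hgc.continuousAt (hU.mem_nhds ht)
    have h1 : g t ∈ closure (g '' S) := mem_closure_image hca (hdense ht)
    have h2 : g '' S ⊆ {0} := by rintro _ ⟨s, hs, rfl⟩; exact hgS s hs
    have := closure_mono h2 h1
    simpa using this
  by_contra hmem
  have hli : LinearIndependent ℝ (w t) := by
    rw [hw, linearIndependent_fin_snoc]
    exact ⟨hhli t ht, hmem⟩
  exact ((gram_det_ne_zero_iff (w t)).mp hli) hgt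

/-- Uniqueness of the Legendre lift of a proper frontal.
Let `U ⊆ ℝⁿ` be open, `n ≤ m`, `f : U → ℝ^m` a `C^∞` map whose regular locus
`R(f) = {t ∈ U : fderiv ℝ f t is injective}` is dense in `U`.  If `(h₁, …, h_n)` and
`(k₁, …, k_n)` are smooth, pointwise linearly independent frames on `U` whose pointwise
spans both contain the range of `fderiv ℝ f t` for every `t ∈ U`, then
`span{h₁(t), …, h_n(t)} = span{k₁(t), …, k_n(t)}` for every `t ∈ U`.
(Uniqueness part of Proposition 6.2 of the paper.) -/
theorem legendre_lift_unique_of_dense_regular_locus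
    (n m : ℕ) (hnm : n ≤ m)
    (U : Set (EuclideanSpace ℝ (Fin n))) (hU : IsOpen U)
    (f : EuclideanSpace ℝ (Fin n) → EuclideanSpace ℝ (Fin m))
    (hf : ContDiffOn ℝ (⊤ : ℕ∞) f U)
    (hdense : U ⊆ closure {t ∈ U | Function.Injective (fderiv ℝ f t)})
    (h k : Fin n → EuclideanSpace ℝ (Fin n) → EuclideanSpace ℝ (Fin m))
    (hh : ∀ i, ContDiffOn ℝ (⊤ : ℕ∞) (h i) U)
    (hk : ∀ i, ContDiffOn ℝ (⊤ : ℕ∞) (k i) U)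
    (hhli : ∀ t ∈ U, LinearIndependent ℝ (fun i => h i t))
    (hkli : ∀ t ∈ U, LinearIndependent ℝ (fun i => k i t))
    (hhspan : ∀ t ∈ U, LinearMap.range
        (fderiv ℝ f t : EuclideanSpace ℝ (Fin n) →ₗ[ℝ] EuclideanSpace ℝ (Fin m)) ≤
      Submodule.span ℝ (Set.range fun i => h i t))
    (hkspan : ∀ t ∈ U, LinearMap.range
        (fderiv ℝ f t : EuclideanSpace ℝ (Fin n) →ₗ[ℝ] EuclideanSpace ℝ (Fin m)) ≤
      Submodule.span ℝ (Set.range fun i => k i t)) :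
    ∀ t ∈ U, Submodule.span ℝ (Set.range fun i => h i t)
      = Submodule.span ℝ (Set.range fun i => k i t) := by
  intro t ht
  apply le_antisymm
  · exact span_le_aux n m U hU f hdense k h hk hh hkli hhli hkspan hhspan t ht
  · exact span_le_aux n m U hU f hdense h k hh hk hhli hkli hhspan hkspan t ht
end
end

section
/- Let U ⊆ ℝⁿ be open (n ≥ 1), n ≤ m, f : U → ℝ^m a C^∞ map, a ∈ U, and let h₁, …, h_n : U → ℝ^m be smooth maps which are linearly independent at every point with range(fderiv ℝ f t) ⊆ span{h₁(t), …, h_n(t)} for all t ∈ U (so f is a frontal with frame (h₁, …, h_n)). Let σ : U → ℝ be a signed area density function of f relative to this frame, and suppose the singular point a is non-degenerate, i.e. σ(a) = 0 and fderiv ℝ σ a ≠ 0. Then f has corank one at a; that is, the rank of fderiv ℝ f a equals n − 1. -/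
noncomputable section

open Set

/-- Over `ℝ`, the `ιMulti` of a linearly independent family admits a dual functional
sending it to `1`. -/
lemma exists_dual_iMulti {F : Type*} [AddCommGroup F] [Module ℝ F]
    {n : ℕ} {v : Fin n → F} (hv : LinearIndependent ℝ v) :
    ∃ L : ExteriorAlgebra ℝ F →ₗ[ℝ] ℝ,
      L (ExteriorAlgebra.ιMulti ℝ n v) = 1 := by
  classical
  set p := Submodule.span ℝ (Set.range v) with hp
  let P₀ : p →ₗ[ℝ] (Fin n → ℝ) :=
    (Finsupp.linearEquivFunOnFinite ℝ ℝ (Fin n)).toLinearMap.comp hv.repr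
  obtain ⟨P, hP⟩ := P₀.exists_extend
  have hPv : ∀ i, P (v i) = Pi.single i 1 := by
    intro i
    have hvi : v i ∈ p := Submodule.subset_span (Set.mem_range_self i)
    have h1 : P (v i) = P₀ ⟨v i, hvi⟩ := by
      conv_lhs => rw [show v i = p.subtype ⟨v i, hvi⟩ from rfl, ← LinearMap.comp_apply, hP]
    rw [h1]
    have h2 : hv.repr ⟨v i, hvi⟩ = Finsupp.single i 1 := hv.repr_eq_single i _ rfl
    simp only [P₀, LinearMap.comp_apply, h2, LinearEquiv.coe_coe]
    ext j
    simp [Finsupp.linearEquivFunOnFinite, LinearMap.coe_mk, AddHom.coe_mk, Finsupp.single_apply, Pi.single_apply, eq_comm]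
    exact Finsupp.single_apply.symm
  let A : F [⋀^Fin n]→ₗ[ℝ] ℝ := Matrix.detRowAlternating.compLinearMap P
  have hA : A v = 1 := by
    have hmat : Matrix.of (fun i => P (v i)) = (1 : Matrix (Fin n) (Fin n) ℝ) := by
      ext i j
      simp [hPv, Matrix.one_apply, Pi.single_apply, eq_comm]
    have : A v = Matrix.det (Matrix.of fun i => P (v i)) := rfl
    rw [this, hmat, Matrix.det_one]
  let fam : ∀ k : ℕ, F [⋀^Fin k]→ₗ[ℝ] ℝ := Function.update (fun _ => 0) n A
  refine ⟨ExteriorAlgebra.liftAlternating fam, ?_⟩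
  rw [ExteriorAlgebra.liftAlternating_apply_ιMulti]
  simp only [fam, Function.update_self]
  exact hA

/-- Any real multilinear map on euclidean spaces is continuous. -/
lemma multilinear_continuous_eucl {n m : ℕ}
    (f : MultilinearMap ℝ (fun _ : Fin n => EuclideanSpace ℝ (Fin m)) ℝ) :
    Continuous f := by
  classical
  have hy : ∀ y : EuclideanSpace ℝ (Fin m),
      y = ∑ j : Fin m, y j • EuclideanSpace.single j (1:ℝ) := by
    intro y
    have := (EuclideanSpace.basisFun (Fin m) ℝ).toBasis.sum_repr y
    simpa [EuclideanSpace.basisFun_repr] using this.symm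
  have key : ∀ v : Fin n → EuclideanSpace ℝ (Fin m),
      f v = ∑ k : Fin n → Fin m,
        (∏ i, v i (k i)) * f (fun i => EuclideanSpace.single (k i) (1:ℝ)) := by
    intro v
    conv_lhs => rw [show v = fun i => ∑ j : Fin m, v i j • EuclideanSpace.single j (1:ℝ) from
      funext fun i => hy (v i)]
    rw [f.map_sum]
    refine Finset.sum_congr rfl fun k _ => ?_
    rw [f.map_smul_univ]
    simp [smul_eq_mul]
  have : (⇑f) = fun v : Fin n → EuclideanSpace ℝ (Fin m) => ∑ k : Fin n → Fin m,
        (∏ i, v i (k i)) * f (fun i => EuclideanSpace.single (k i) (1:ℝ)) := funext key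
  rw [this]
  refine continuous_finset_sum _ fun k _ => ?_
  refine Continuous.mul ?_ continuous_const
  refine continuous_finset_prod _ fun i _ => ?_
  exact (EuclideanSpace.proj (k i)).continuous.comp (continuous_apply i)

/-- A frontal has corank one at a non-degenerate singular point.
Let `U ⊆ ℝⁿ` be open (`n ≥ 1`, `n ≤ m`), `f : U → ℝ^m` a `C^∞` map, `(h₁, …, h_n)` a
smooth, pointwise linearly independent frame with `range (fderiv ℝ f t) ⊆ span{hᵢ(t)}`
on `U`, and `σ` a signed area density function of `f` relative to this frame.  If the
singular point `a` is non-degenerate (`σ a = 0` and `fderiv ℝ σ a ≠ 0`), then the rank of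
`fderiv ℝ f a` equals `n - 1`.  (Lemma 6.6 of the paper.) -/
theorem rank_eq_of_nondegenerate_singular_point
    (n m : ℕ) (hn : 1 ≤ n) (hnm : n ≤ m)
    (U : Set (EuclideanSpace ℝ (Fin n))) (hU : IsOpen U)
    (a : EuclideanSpace ℝ (Fin n)) (ha : a ∈ U)
    (f : EuclideanSpace ℝ (Fin n) → EuclideanSpace ℝ (Fin m))
    (hf : ContDiffOn ℝ (⊤ : ℕ∞) f U)
    (h : Fin n → EuclideanSpace ℝ (Fin n) → EuclideanSpace ℝ (Fin m))
    (hh : ∀ i, ContDiffOn ℝ (⊤ : ℕ∞) (h i) U)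
    (hhli : ∀ t ∈ U, LinearIndependent ℝ (fun i => h i t))
    (hhspan : ∀ t ∈ U, LinearMap.range
        (fderiv ℝ f t : EuclideanSpace ℝ (Fin n) →ₗ[ℝ] EuclideanSpace ℝ (Fin m)) ≤
      Submodule.span ℝ (Set.range fun i => h i t))
    (σ : EuclideanSpace ℝ (Fin n) → ℝ) (hσ : ContDiffOn ℝ (⊤ : ℕ∞) σ U)
    (hσdens : ∀ t ∈ U,
      ExteriorAlgebra.ιMulti ℝ n
          (fun i => fderiv ℝ f t (EuclideanSpace.single i (1 : ℝ)))
        = σ t • ExteriorAlgebra.ιMulti ℝ n (fun i => h i t))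
    (hσa : σ a = 0) (hdσa : fderiv ℝ σ a ≠ 0) :
    Module.finrank ℝ (LinearMap.range
      (fderiv ℝ f a : EuclideanSpace ℝ (Fin n) →ₗ[ℝ] EuclideanSpace ℝ (Fin m))) = n - 1 := by
  classical
  set w : EuclideanSpace ℝ (Fin n) → Fin n → EuclideanSpace ℝ (Fin m) :=
    fun t i => fderiv ℝ f t (EuclideanSpace.single i (1:ℝ)) with hw
  -- the partial derivatives at `a` are linearly dependent
  have hwadep : ¬ LinearIndependent ℝ (w a) := by
    intro hli
    obtain ⟨L, hL⟩ := exists_dual_iMulti hli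
    have h0 := hσdens a ha
    rw [hσa, zero_smul] at h0
    rw [show (fun i => fderiv ℝ f a (EuclideanSpace.single i (1:ℝ))) = w a from rfl] at h0
    rw [h0, map_zero] at hL
    exact one_ne_zero hL.symm
  have hy : ∀ y : EuclideanSpace ℝ (Fin n),
      y = ∑ j : Fin n, y j • EuclideanSpace.single j (1:ℝ) := by
    intro y
    have := (EuclideanSpace.basisFun (Fin n) ℝ).toBasis.sum_repr y
    simpa [EuclideanSpace.basisFun_repr] using this.symm
  have hrange : LinearMap.range (fderiv ℝ f a : EuclideanSpace ℝ (Fin n) →ₗ[ℝ] EuclideanSpace ℝ (Fin m)) = Submodule.span ℝ (Set.range (w a)) := by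
    apply le_antisymm
    · rintro x ⟨y, rfl⟩
      have hxy : (fderiv ℝ f a) y = ∑ j, y j • w a j := by
        conv_lhs => rw [hy y]
        rw [map_sum]
        simp [hw]
      show (fderiv ℝ f a) y ∈ _
      rw [hxy]
      exact Submodule.sum_mem _ fun j _ =>
        Submodule.smul_mem _ _ (Submodule.subset_span ⟨j, rfl⟩)
    · rw [Submodule.span_le]
      rintro x ⟨i, rfl⟩
      exact ⟨EuclideanSpace.single i 1, rfl⟩
  have hle : Module.finrank ℝ (LinearMap.range (fderiv ℝ f a : EuclideanSpace ℝ (Fin n) →ₗ[ℝ] EuclideanSpace ℝ (Fin m))) ≤ n - 1 := by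
    have h1 : Set.finrank ℝ (Set.range (w a)) ≤ n := by
      simpa using finrank_range_le_card (w a)
    have h2 : ¬ (Fintype.card (Fin n) = Set.finrank ℝ (Set.range (w a))) :=
      fun hc => hwadep (linearIndependent_iff_card_eq_finrank_span.2 hc)
    rw [hrange]
    have h3 : Module.finrank ℝ (Submodule.span ℝ (Set.range (w a)))
        = Set.finrank ℝ (Set.range (w a)) := rfl
    rw [h3]
    simp only [Fintype.card_fin] at h2
    omega
  have hge : n - 1 ≤ Module.finrank ℝ (LinearMap.range (fderiv ℝ f a : EuclideanSpace ℝ (Fin n) →ₗ[ℝ] EuclideanSpace ℝ (Fin m))) := by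
    by_contra hlt
    push_neg at hlt
    obtain ⟨L, hL⟩ := exists_dual_iMulti (hhli a ha)
    let A : (EuclideanSpace ℝ (Fin m)) [⋀^Fin n]→ₗ[ℝ] ℝ :=
      L.compAlternatingMap (ExteriorAlgebra.ιMulti ℝ n)
    let M : ContinuousMultilinearMap ℝ (fun _ : Fin n => EuclideanSpace ℝ (Fin m)) ℝ :=
      ⟨A.toMultilinearMap, multilinear_continuous_eucl _⟩
    -- differentiability facts
    have hfd : DifferentiableAt ℝ (fderiv ℝ f) a := by
      have h1 : ContDiffAt ℝ (⊤:ℕ∞) f a := hf.contDiffAt (hU.mem_nhds ha)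
      exact ((h1.fderiv_right (m := (1:ℕ∞)) (by exact_mod_cast le_top)).differentiableAt one_ne_zero)
    have hwd : ∀ i, DifferentiableAt ℝ (fun t => w t i) a := fun i =>
      hfd.clm_apply (differentiableAt_const _)
    have hσd : DifferentiableAt ℝ σ a :=
      ((hσ.contDiffAt (hU.mem_nhds ha)).differentiableAt (by simp))
    have hhd : ∀ i, DifferentiableAt ℝ (h i) a := fun i =>
      (((hh i).contDiffAt (hU.mem_nhds ha)).differentiableAt (by simp))
    -- `M` of any update of `w a` vanishes
    have hzero : ∀ (i : Fin n) (z : EuclideanSpace ℝ (Fin m)),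
        M (Function.update (fun j => w a j) i z) = 0 := by
      intro i z
      have hdep : ¬ LinearIndependent ℝ (Function.update (fun j => w a j) i z) := by
        intro hli
        have hli2 := hli.comp (Subtype.val : {j : Fin n // j ≠ i} → Fin n)
          Subtype.val_injective
        have heqf : ((Function.update (fun j => w a j) i z) ∘ Subtype.val
            : {j : Fin n // j ≠ i} → EuclideanSpace ℝ (Fin m))
            = fun j : {j : Fin n // j ≠ i} => w a (j : Fin n) := by
          funext j
          exact Function.update_of_ne j.2 _ _
        rw [heqf] at hli2
        set p := LinearMap.range (fderiv ℝ f a : EuclideanSpace ℝ (Fin n) →ₗ[ℝ] EuclideanSpace ℝ (Fin m)) with hpdef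
        let u : {j : Fin n // j ≠ i} → p := fun j =>
          ⟨w a (j : Fin n), ⟨EuclideanSpace.single (j : Fin n) 1, rfl⟩⟩
        have hu : LinearIndependent ℝ u := LinearIndependent.of_comp p.subtype hli2
        have hcard : Fintype.card {j : Fin n // j ≠ i} ≤ Module.finrank ℝ p :=
          hu.fintype_card_le_finrank
        have hc2 : Fintype.card {j : Fin n // j ≠ i} = n - 1 := by
          simp [Fintype.card_subtype_compl, Fintype.card_subtype_eq]
        omega
      exact A.map_linearDependent _ hdep
    -- derivative of the left-hand side
    have hg : HasFDerivAt (fun t => M (fun i => w t i))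
        (∑ i, (M.toContinuousLinearMap (fun j => w a j) i).comp
          (fderiv ℝ (fun t => w t i) a)) a :=
      HasFDerivAt.multilinear_comp M (fun i => (hwd i).hasFDerivAt)
    have hD : (∑ i, (M.toContinuousLinearMap (fun j => w a j) i).comp
          (fderiv ℝ (fun t => w t i) a))
        = (0 : EuclideanSpace ℝ (Fin n) →L[ℝ] ℝ) := by
      ext v
      rw [ContinuousLinearMap.sum_apply]
      rw [ContinuousLinearMap.zero_apply]
      refine Finset.sum_eq_zero fun i _ => ?_
      rw [ContinuousLinearMap.comp_apply]
      rw [ContinuousMultilinearMap.toContinuousLinearMap_apply]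
      exact hzero i _
    rw [hD] at hg
    -- derivative of the right-hand side
    have hc : HasFDerivAt (fun t => M (fun i => h i t))
        (∑ i, (M.toContinuousLinearMap (fun j => h j a) i).comp (fderiv ℝ (h i) a)) a :=
      HasFDerivAt.multilinear_comp M (fun i => (hhd i).hasFDerivAt)
    have hσ' : HasFDerivAt σ (fderiv ℝ σ a) a := hσd.hasFDerivAt
    have hprod := hσ'.mul hc
    -- the two sides agree near `a`
    have heq : (fun t => M (fun i => w t i))
        =ᶠ[nhds a] (fun t => σ t * M (fun i => h i t)) := by
      filter_upwards [hU.mem_nhds ha] with t ht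
      have h1 : M (fun i => w t i)
          = L (ExteriorAlgebra.ιMulti ℝ n (fun i => w t i)) := rfl
      have h2 : M (fun i => h i t)
          = L (ExteriorAlgebra.ιMulti ℝ n (fun i => h i t)) := rfl
      rw [h1, h2, hw]
      rw [hσdens t ht, map_smul, smul_eq_mul]
    have hprod0 : HasFDerivAt (fun t => σ t * M (fun i => h i t))
        (0 : EuclideanSpace ℝ (Fin n) →L[ℝ] ℝ) a :=
      hg.congr_of_eventuallyEq heq.symm
    have huniq := hprod0.unique hprod
    rw [hσa, zero_smul, zero_add] at huniq
    have hca : M (fun i => h i a) = 1 := hL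
    rw [hca, one_smul] at huniq
    exact hdσa huniq.symm
  omega
end
end

section
/- Let U ⊆ ℝⁿ be open, a ∈ U, and f = (f₁, …, f_m) : U → ℝ^m a C^∞ map. Suppose h : U → ℝ is smooth and there exist an open neighbourhood W ⊆ U of a and smooth functions p₁, …, p_m : W → ℝ such that fderiv ℝ h t = Σⱼ pⱼ(t) • fderiv ℝ fⱼ t for all t ∈ W (i.e. dh lies in the Jacobi module 𝒥_f = ℰ·{df₁, …, df_m} near a, so h ∈ ℛ_f). Then for every C^∞ function k : ℝ^m → ℝ there exist an open neighbourhood W' of a and smooth functions q₁, …, q_m : W' → ℝ such that fderiv ℝ ((k ∘ f) · h) t = Σⱼ qⱼ(t) • fderiv ℝ fⱼ t for all t ∈ W'. In other words, the ramification module ℛ_f is closed under multiplication by functions pulled back from the target, i.e. ℛ_f is a module over the target function ring via f*. -/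
noncomputable section

open Set Finset

/-- The ramification module `ℛ_f` is a module over the target function ring
via `f^*`.  Let `U ⊆ ℝⁿ` be open, `a ∈ U`, and `f : U → ℝ^m` a `C^∞` map with components
`fⱼ`.  If `h : U → ℝ` is smooth and `dh = Σⱼ pⱼ dfⱼ` near `a` for smooth `pⱼ` (so
`h ∈ ℛ_f`), then for every `C^∞` function `k : ℝ^m → ℝ` there are smooth `qⱼ` near `a` with
`d((k ∘ f)·h) = Σⱼ qⱼ dfⱼ`.  (Part (1) of Lemma 8.3 of the paper.) -/
theorem ramification_module_closed_under_pullback_mul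
    (n m : ℕ) (U : Set (EuclideanSpace ℝ (Fin n))) (hU : IsOpen U)
    (a : EuclideanSpace ℝ (Fin n)) (ha : a ∈ U)
    (f : EuclideanSpace ℝ (Fin n) → EuclideanSpace ℝ (Fin m))
    (hf : ContDiffOn ℝ (⊤ : ℕ∞) f U)
    (h : EuclideanSpace ℝ (Fin n) → ℝ) (hh : ContDiffOn ℝ (⊤ : ℕ∞) h U)
    (W : Set (EuclideanSpace ℝ (Fin n))) (hW : IsOpen W) (haW : a ∈ W) (hWU : W ⊆ U)
    (p : Fin m → EuclideanSpace ℝ (Fin n) → ℝ)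
    (hp : ∀ j, ContDiffOn ℝ (⊤ : ℕ∞) (p j) W)
    (hdh : ∀ t ∈ W, fderiv ℝ h t = ∑ j, p j t • fderiv ℝ (fun s => f s j) t)
    (k : EuclideanSpace ℝ (Fin m) → ℝ) (hk : ContDiff ℝ (⊤ : ℕ∞) k) :
    ∃ W' : Set (EuclideanSpace ℝ (Fin n)), IsOpen W' ∧ a ∈ W' ∧ W' ⊆ U ∧
      ∃ q : Fin m → EuclideanSpace ℝ (Fin n) → ℝ,
        (∀ j, ContDiffOn ℝ (⊤ : ℕ∞) (q j) W') ∧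
        ∀ t ∈ W', fderiv ℝ (fun s => k (f s) * h s) t
          = ∑ j, q j t • fderiv ℝ (fun s => f s j) t := by
  classical
  refine ⟨W, hW, haW, hWU,
    fun j t => k (f t) * p j t + h t * (fderiv ℝ k (f t)) (EuclideanSpace.single j 1),
    ?_, ?_⟩
  · intro j
    have hfW : ContDiffOn ℝ (⊤ : ℕ∞) f W := hf.mono hWU
    have hhW : ContDiffOn ℝ (⊤ : ℕ∞) h W := hh.mono hWU
    have hk' : ContDiff ℝ (⊤ : ℕ∞) (fderiv ℝ k) := hk.fderiv_right (by exact_mod_cast le_top)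
    exact ((hk.comp_contDiffOn hfW).mul (hp j)).add
      (hhW.mul ((hk'.comp_contDiffOn hfW).clm_apply contDiffOn_const))
  · intro t ht
    have htU : t ∈ U := hWU ht
    have hfd : DifferentiableAt ℝ f t :=
      (hf.contDiffAt (hU.mem_nhds htU)).differentiableAt (by simp)
    have hhd : DifferentiableAt ℝ h t :=
      (hh.contDiffAt (hU.mem_nhds htU)).differentiableAt (by simp)
    have hkd : DifferentiableAt ℝ k (f t) := hk.differentiable (by simp) _
    have hkfd : DifferentiableAt ℝ (fun s => k (f s)) t := hkd.comp t hfd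
    have hcoord : ∀ j : Fin m, fderiv ℝ (fun s => f s j) t
        = (EuclideanSpace.proj j : EuclideanSpace ℝ (Fin m) →L[ℝ] ℝ).comp (fderiv ℝ f t) := by
      intro j
      have h1 := fderiv_comp t
        (EuclideanSpace.proj j : EuclideanSpace ℝ (Fin m) →L[ℝ] ℝ).differentiableAt hfd
      rw [ContinuousLinearMap.fderiv] at h1
      exact h1
    have hkey : fderiv ℝ (fun s => k (f s)) t
        = ∑ j, (fderiv ℝ k (f t)) (EuclideanSpace.single j 1) • fderiv ℝ (fun s => f s j) t := by
      have hcomp : fderiv ℝ (fun s => k (f s)) t = (fderiv ℝ k (f t)).comp (fderiv ℝ f t) :=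
        fderiv_comp t hkd hfd
      rw [hcomp]
      ext v
      simp only [ContinuousLinearMap.coe_comp', Function.comp_apply,
        ContinuousLinearMap.coe_sum', Finset.sum_apply, ContinuousLinearMap.coe_smul',
        Pi.smul_apply, hcoord, smul_eq_mul]
      have hdecomp : fderiv ℝ f t v
          = ∑ j, (fderiv ℝ f t v j) • (EuclideanSpace.single j 1 : EuclideanSpace ℝ (Fin m)) := by
        have := (EuclideanSpace.basisFun (Fin m) ℝ).sum_repr (fderiv ℝ f t v)
        simpa [EuclideanSpace.basisFun_apply, EuclideanSpace.basisFun_repr] using this.symm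
      conv_lhs => rw [hdecomp]
      rw [map_sum]
      simp [mul_comm]
    have hmul : fderiv ℝ (fun s => k (f s) * h s) t
        = k (f t) • fderiv ℝ h t + h t • fderiv ℝ (fun s => k (f s)) t :=
      fderiv_mul hkfd hhd
    rw [hmul, hdh t ht, hkey, Finset.smul_sum, Finset.smul_sum, ← Finset.sum_add_distrib]
    refine Finset.sum_congr rfl fun j _ => ?_
    rw [add_smul, smul_smul, smul_smul]
end
end

section
/- Let f : ℝ → ℝ^m be a C^∞ map and μ ≥ 1 an integer such that iteratedDeriv k f 0 = 0 for all k with 1 ≤ k < μ and iteratedDeriv μ f 0 ≠ 0 (i.e. f has finite order μ at 0). Then there exist ε > 0 and a C^∞ map v : (−ε, ε) → ℝ^m such that v(0) ≠ 0 and deriv f t = t^{μ−1} • v(t) for all |t| < ε. In particular, f is a frontal at 0: on a neighbourhood of 0 there is a smooth nowhere-vanishing vector field v along f and a smooth scalar function λ with f'(t) = λ(t) • v(t). -/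
noncomputable section

open Set intervalIntegral MeasureTheory
open scoped ContDiff

variable {E : Type*} [NormedAddCommGroup E] [NormedSpace ℝ E] [CompleteSpace E]

/-- One step of the Hadamard lemma. -/
lemma hadamard_step (g : ℝ → E) (hg : ContDiff ℝ (⊤ : ℕ∞) g) (h0 : g 0 = 0) :
    ∃ h : ℝ → E, ContDiff ℝ (⊤ : ℕ∞) h ∧ (∀ t, g t = t • h t) ∧
      ∀ n : ℕ, iteratedDeriv n h 0 = ((n + 1 : ℝ))⁻¹ • iteratedDeriv (n + 1) g 0 := by
  have hg' : Differentiable ℝ g := hg.differentiable (by norm_num)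
  set G := deriv g with hGdef
  have hgi : ContDiff ℝ ∞ g := by exact_mod_cast hg
  have hG : ContDiff ℝ (⊤ : ℕ∞) G := by
    exact_mod_cast (contDiff_infty_iff_deriv.mp hgi).2
  set H : ℕ → ℝ → E := fun n t => ∫ s in (0:ℝ)..1, s ^ n • iteratedDeriv n G (s * t) with hH
  have hGi : ContDiff ℝ ∞ G := by exact_mod_cast hG
  have hGn : ∀ n, ContDiff ℝ (⊤ : ℕ∞) (iteratedDeriv n G) := by
    intro n
    rw [iteratedDeriv_eq_iterate]
    exact_mod_cast hGi.iterate_deriv n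
  have hGnd : ∀ n (x : ℝ), HasDerivAt (iteratedDeriv n G) (iteratedDeriv (n + 1) G x) x := by
    intro n x
    rw [iteratedDeriv_succ]
    exact ((hGn n).differentiable (by norm_num) x).hasDerivAt
  have key : ∀ n (t₀ : ℝ), HasDerivAt (H n) (H (n + 1) t₀) t₀ := by
    intro n t₀
    obtain ⟨C, hC⟩ : ∃ C, ∀ y ∈ Icc (-(|t₀| + 1)) (|t₀| + 1), ‖iteratedDeriv (n+1) G y‖ ≤ C :=
      (isCompact_Icc).exists_bound_of_continuousOn ((hGn (n+1)).continuous.continuousOn)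
    have cont : ∀ (k : ℕ) (x : ℝ), Continuous fun s : ℝ => s ^ k • iteratedDeriv k G (s * x) :=
      fun k x => (continuous_pow k).smul ((hGn k).continuous.comp (continuous_mul_right x))
    have := hasDerivAt_integral_of_dominated_loc_of_deriv_le (μ := volume) (a := 0) (b := 1)
      (F := fun x s => s ^ n • iteratedDeriv n G (s * x))
      (F' := fun x s => s ^ (n+1) • iteratedDeriv (n+1) G (s * x))
      (x₀ := t₀) (bound := fun _ => C) (Metric.ball_mem_nhds t₀ one_pos)
      (Filter.Eventually.of_forall fun x => ((cont n x).aestronglyMeasurable))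
      ((cont n t₀).intervalIntegrable 0 1)
      ((cont (n+1) t₀).aestronglyMeasurable)
      ?_ (intervalIntegrable_const) ?_
    · exact this.2
    · refine Filter.Eventually.of_forall fun s hs x hx => ?_
      have hs' : s ∈ Set.Ioc (0:ℝ) 1 := by rwa [Set.uIoc_of_le (by norm_num)] at hs
      have h1 : |s| ≤ 1 := by rw [abs_of_pos hs'.1]; exact hs'.2
      have h2 : |x| ≤ |t₀| + 1 := by
        have hd : |x - t₀| < 1 := by
          simpa [Real.dist_eq] using (Metric.mem_ball.mp hx)
        calc |x| = |x - t₀ + t₀| := by ring_nf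
          _ ≤ |x - t₀| + |t₀| := abs_add_le _ _
          _ ≤ |t₀| + 1 := by linarith
      have hsx : s * x ∈ Icc (-(|t₀| + 1)) (|t₀| + 1) := by
        have : |s * x| ≤ |t₀| + 1 := by
          rw [abs_mul]
          calc |s| * |x| ≤ 1 * (|t₀| + 1) := mul_le_mul h1 h2 (abs_nonneg _) one_pos.le
            _ = |t₀| + 1 := one_mul _
        exact ⟨(abs_le.mp this).1, (abs_le.mp this).2⟩
      have hCpos : 0 ≤ C :=
        le_trans (norm_nonneg (iteratedDeriv (n+1) G 0))
          (hC 0 ⟨by linarith [abs_nonneg t₀], by linarith [abs_nonneg t₀]⟩)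
      calc ‖s ^ (n+1) • iteratedDeriv (n+1) G (s * x)‖
          = |s| ^ (n+1) * ‖iteratedDeriv (n+1) G (s * x)‖ := by
            rw [norm_smul, Real.norm_eq_abs, abs_pow]
        _ ≤ 1 * C := mul_le_mul (pow_le_one₀ (abs_nonneg s) h1) (hC _ hsx)
            (norm_nonneg _) one_pos.le
        _ = C := one_mul C
    · refine Filter.Eventually.of_forall fun s _ x _ => ?_
      have h1 : HasDerivAt (fun x : ℝ => s * x) s x := by
        simpa using (hasDerivAt_id x).const_mul s
      have h2 := (hGnd n (s * x)).scomp x h1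
      have h3 := h2.const_smul (s ^ n)
      convert h3 using 1
      · funext y; rfl
      simp only [smul_smul, pow_succ]
  -- smoothness of H n
  have smoothH : ∀ (m : ℕ) (n : ℕ), ContDiff ℝ (m : WithTop ℕ∞) (H n) := by
    intro m
    induction m with
    | zero =>
      intro n
      rw [show ((0 : ℕ) : WithTop ℕ∞) = 0 by norm_cast, contDiff_zero]
      exact continuous_iff_continuousAt.mpr fun t => (key n t).continuousAt
    | succ m ih =>
      intro n
      rw [show ((m + 1 : ℕ) : WithTop ℕ∞) = (m : WithTop ℕ∞) + 1 by norm_cast]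
      refine contDiff_succ_iff_deriv.mpr ⟨fun t => (key n t).differentiableAt, ?_, ?_⟩
      · intro h; exact absurd h (by simp)
      · rw [show deriv (H n) = H (n + 1) from funext fun t => (key n t).deriv]
        exact ih (n + 1)
  have smoothH0 : ContDiff ℝ (⊤ : ℕ∞) (H 0) := by
    have : ContDiff ℝ ∞ (H 0) := contDiff_infty.mpr fun m => smoothH m 0
    exact_mod_cast this
  -- iterated derivatives of H 0
  have iterH : ∀ n, iteratedDeriv n (H 0) = H n := by
    intro n
    induction n with
    | zero => simp [iteratedDeriv_zero]
    | succ n ih =>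
      rw [iteratedDeriv_succ, ih]
      exact funext fun t => (key n t).deriv
  refine ⟨H 0, smoothH0, ?_, ?_⟩
  · -- g t = t • H 0 t
    intro t
    have hderiv : ∀ u ∈ uIcc (0:ℝ) 1, HasDerivAt (fun u => g (u * t)) (t • G (u * t)) u := by
      intro u _
      have h1 : HasDerivAt (fun u : ℝ => u * t) t u := hasDerivAt_mul_const t
      have h2 : HasDerivAt g (G (u * t)) (u * t) := (hg' (u * t)).hasDerivAt
      exact h2.scomp u h1
    have hint : IntervalIntegrable (fun u => t • G (u * t)) volume 0 1 :=
      (continuous_const.smul (hG.continuous.comp (continuous_mul_right t))).intervalIntegrable 0 1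
    have := intervalIntegral.integral_eq_sub_of_hasDerivAt hderiv hint
    simp only [one_mul, zero_mul, h0, sub_zero] at this
    rw [← this, hH]
    simp only [pow_zero, one_smul]
    rw [← intervalIntegral.integral_smul]
    simp [iteratedDeriv_zero]
  · -- values of iterated derivatives at 0
    intro n
    rw [iterH n, hH]
    simp only [mul_zero]
    rw [intervalIntegral.integral_smul_const, integral_pow]
    rw [← iteratedDeriv_succ']
    norm_num

/-- Hadamard lemma with vanishing to order `k`. -/
lemma hadamard_pow (k : ℕ) (g : ℝ → E) (hg : ContDiff ℝ (⊤ : ℕ∞) g)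
    (hvan : ∀ j < k, iteratedDeriv j g 0 = 0) :
    ∃ v : ℝ → E, ContDiff ℝ (⊤ : ℕ∞) v ∧ (∀ t, g t = t ^ k • v t) ∧
      ((Nat.factorial k : ℕ) : ℝ) • v 0 = iteratedDeriv k g 0 := by
  induction k generalizing g with
  | zero =>
    exact ⟨g, hg, fun t => by simp, by simp [iteratedDeriv_zero]⟩
  | succ k ih =>
    have g0 : g 0 = 0 := by
      have := hvan 0 (Nat.succ_pos k)
      simpa [iteratedDeriv_zero] using this
    obtain ⟨h, hhs, hfac, hval⟩ := hadamard_step g hg g0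
    have hvan' : ∀ j < k, iteratedDeriv j h 0 = 0 := by
      intro j hj
      rw [hval j, hvan (j + 1) (by omega), smul_zero]
    obtain ⟨v, hvs, hvfac, hv0⟩ := ih h hhs hvan'
    refine ⟨v, hvs, fun t => ?_, ?_⟩
    · rw [hfac t, hvfac t, smul_smul, pow_succ, mul_comm]
    · have h1 : ((Nat.factorial (k + 1) : ℕ) : ℝ) • v 0 = ((k + 1 : ℝ)) • (((Nat.factorial k : ℕ) : ℝ) • v 0) := by
        rw [smul_smul, Nat.factorial_succ]
        push_cast
        ring_nf
      rw [h1, hv0, hval k, smul_smul]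
      have : ((k : ℝ) + 1) * ((k : ℝ) + 1)⁻¹ = 1 := by
        field_simp
      rw [this, one_smul]

/-- A curve-germ of finite order is a frontal.
Let `f : ℝ → ℝ^m` be `C^∞` with `iteratedDeriv k f 0 = 0` for `1 ≤ k < μ` and
`iteratedDeriv μ f 0 ≠ 0` (so `f` has order `μ` at `0`).  Then there are `ε > 0` and a
`C^∞` map `v : (−ε, ε) → ℝ^m` with `v 0 ≠ 0` and `deriv f t = t^{μ−1} • v t` for `|t| < ε`;
in particular `f` is a frontal at `0`.  (First assertion of Lemma 13.1 of the paper.) -/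
theorem frontal_of_finite_order_curve
    (m : ℕ) (f : ℝ → EuclideanSpace ℝ (Fin m)) (hf : ContDiff ℝ (⊤ : ℕ∞) f)
    (μ : ℕ) (hμ : 1 ≤ μ)
    (hvanish : ∀ k : ℕ, 1 ≤ k → k < μ → iteratedDeriv k f 0 = 0)
    (hne : iteratedDeriv μ f 0 ≠ 0) :
    ∃ ε > (0 : ℝ), ∃ v : ℝ → EuclideanSpace ℝ (Fin m),
      ContDiffOn ℝ (⊤ : ℕ∞) v (Set.Ioo (-ε) ε) ∧ v 0 ≠ 0 ∧
      ∀ t ∈ Set.Ioo (-ε) ε, deriv f t = t ^ (μ - 1) • v t := by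
  have hfi : ContDiff ℝ ∞ f := by exact_mod_cast hf
  have hg : ContDiff ℝ (⊤ : ℕ∞) (deriv f) := by
    exact_mod_cast (contDiff_infty_iff_deriv.mp hfi).2
  have hvan : ∀ j < μ - 1, iteratedDeriv j (deriv f) 0 = 0 := by
    intro j hj
    rw [← iteratedDeriv_succ']
    exact hvanish (j + 1) (by omega) (by omega)
  obtain ⟨v, hvs, hvfac, hv0⟩ := hadamard_pow (μ - 1) (deriv f) hg hvan
  have hd : iteratedDeriv (μ - 1) (deriv f) 0 = iteratedDeriv μ f 0 := by
    rw [← iteratedDeriv_succ']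
    congr 1
    omega
  refine ⟨1, one_pos, v, hvs.contDiffOn, ?_, fun t _ => hvfac t⟩
  intro hz
  rw [hz, smul_zero] at hv0
  exact hne (hd ▸ hv0.symm)
end
end

section
/- Let f : ℝ → ℝ^m be a map which is real-analytic on a neighbourhood of 0 (each component is AnalyticAt ℝ at every point of the neighbourhood) and which is not constant on any neighbourhood of 0. Then f is a frontal at 0: there exist ε > 0, a C^∞ map v : (−ε, ε) → ℝ^m with v(t) ≠ 0 for all |t| < ε, and a C^∞ function λ : (−ε, ε) → ℝ such that deriv f t = λ(t) • v(t) for all |t| < ε. -/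
noncomputable section

open Set

/-- Any non-constant analytic curve-germ is a frontal.
Let `f : ℝ → ℝ^m` be real-analytic on an open neighbourhood of `0` and not constant on any
neighbourhood of `0`.  Then `f` is a frontal at `0`: there exist `ε > 0`, a `C^∞` map
`v : (−ε, ε) → ℝ^m` with `v t ≠ 0` for all `|t| < ε`, and a `C^∞` function
`λ : (−ε, ε) → ℝ` such that `deriv f t = λ t • v t` for all `|t| < ε`.
(Corollary 13.2 of the paper.) -/
theorem frontal_of_nonconstant_analytic_curve
    (m : ℕ) (f : ℝ → EuclideanSpace ℝ (Fin m))
    (U : Set ℝ) (hU : IsOpen U) (h0 : (0 : ℝ) ∈ U)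
    (hf : ∀ x ∈ U, AnalyticAt ℝ f x)
    (hnc : ∀ V ∈ nhds (0 : ℝ), ¬ Set.EqOn f (fun _ => f 0) V) :
    ∃ ε > (0 : ℝ), ∃ v : ℝ → EuclideanSpace ℝ (Fin m), ∃ lam : ℝ → ℝ,
      ContDiffOn ℝ (⊤ : ℕ∞) v (Set.Ioo (-ε) ε) ∧
      ContDiffOn ℝ (⊤ : ℕ∞) lam (Set.Ioo (-ε) ε) ∧
      (∀ t ∈ Set.Ioo (-ε) ε, v t ≠ 0) ∧
      (∀ t ∈ Set.Ioo (-ε) ε, deriv f t = lam t • v t) := by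
  have hfU : AnalyticOnNhd ℝ f U := hf
  have hderiv : AnalyticAt ℝ (deriv f) 0 := hfU.deriv 0 h0
  -- the derivative is not eventually zero near 0
  have hne : ¬ ∀ᶠ t in nhds (0 : ℝ), deriv f t = 0 := by
    intro h
    obtain ⟨s, hs_mem, hs_sub⟩ := (h.and (hU.mem_nhds h0 : U ∈ nhds (0:ℝ))).exists_mem
    obtain ⟨δ, hδ, hball⟩ := Metric.mem_nhds_iff.mp hs_mem
    have hball' : Metric.ball (0:ℝ) δ ⊆ s := hball
    apply hnc (Metric.ball (0:ℝ) δ) (Metric.ball_mem_nhds _ hδ)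
    have hconv : Convex ℝ (Metric.ball (0:ℝ) δ) := convex_ball _ _
    have hdiff : DifferentiableOn ℝ f (Metric.ball (0:ℝ) δ) := fun x hx =>
      ((hf x (hs_sub x (hball' hx)).2).differentiableAt).differentiableWithinAt
    intro x hx
    have : f x = f 0 := by
      apply hconv.is_const_of_fderivWithin_eq_zero hdiff ?_ hx
        (Metric.mem_ball_self hδ)
      intro z hz
      have hz' : Metric.ball (0:ℝ) δ ∈ nhds z :=
        (Metric.isOpen_ball).mem_nhds hz
      rw [fderivWithin_of_mem_nhds hz']
      apply ContinuousLinearMap.ext_ring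
      have hz0 : deriv f z = 0 := (hs_sub z (hball' hz)).1
      simp only [ContinuousLinearMap.zero_apply]
      exact hz0
    exact this
  obtain ⟨n, g, hg_an, hg_ne, hg_eq⟩ :=
    hderiv.exists_eventuallyEq_pow_smul_nonzero_iff.mpr hne
  -- find a small interval where everything holds
  have hg_ev : ∀ᶠ t in nhds (0:ℝ), AnalyticAt ℝ g t := hg_an.eventually_analyticAt
  have hg_ne_ev : ∀ᶠ t in nhds (0:ℝ), g t ≠ 0 :=
    hg_an.continuousAt.eventually_ne hg_ne
  obtain ⟨ε, hε, hball⟩ := Metric.eventually_nhds_iff_ball.mp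
    ((hg_eq.and hg_ev).and hg_ne_ev)
  simp only [Real.ball_eq_Ioo, zero_sub, zero_add] at hball
  refine ⟨ε, hε, g, fun t => t ^ n, ?_, ?_, ?_, ?_⟩
  · intro x hx
    exact ((hball x hx).1.2.contDiffAt).contDiffWithinAt
  · exact (contDiff_id.pow n).contDiffOn
  · intro t ht
    exact (hball t ht).2
  · intro t ht
    simpa using (hball t ht).1.1
end
end

section
/- Define φ : ℝ → ℝ by φ(t) = exp(−1/t²) for t > 0 and φ(t) = 0 for t ≤ 0 (a C^∞ function), and define the half cuspidal edge h : ℝ² → ℝ³ by h(t₁, t₂) = (t₁, t₂², t₂³ + φ(t₁)·t₂). Then h is not a frontal at the origin (0, 0): there do NOT exist an open neighbourhood V of (0, 0) and smooth maps h₁, h₂ : V → ℝ³ such that h₁(t), h₂(t) are linearly independent and range(fderiv ℝ h t) ⊆ span{h₁(t), h₂(t)} for every t ∈ V. -/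
noncomputable section

open Set

/-- The flat function `φ(t) = exp(−1/t²)` for `t > 0`, `φ(t) = 0` for `t ≤ 0`
(a `C^∞` function). -/
def flatPhi (t : ℝ) : ℝ := if 0 < t then Real.exp (-1 / t ^ 2) else 0

/-- The half cuspidal edge `h(t₁, t₂) = (t₁, t₂², t₂³ + φ(t₁)·t₂)`. -/
def halfCuspidalEdge (t : EuclideanSpace ℝ (Fin 2)) : EuclideanSpace ℝ (Fin 3) :=
  (EuclideanSpace.equiv (Fin 3) ℝ).symm
    ![t 0, (t 1) ^ 2, (t 1) ^ 3 + flatPhi (t 0) * t 1]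

/- ### Auxiliary material -/

abbrev FrontalAux.E2 := EuclideanSpace ℝ (Fin 2)
abbrev FrontalAux.E3 := EuclideanSpace ℝ (Fin 3)

namespace FrontalAux

def L3 : (Fin 3 → ℝ) →L[ℝ] E3 :=
  ((EuclideanSpace.equiv (Fin 3) ℝ).symm : (Fin 3 → ℝ) ≃L[ℝ] E3).toContinuousLinearMap

def p0 : E2 →L[ℝ] ℝ := EuclideanSpace.proj 0
def p1 : E2 →L[ℝ] ℝ := EuclideanSpace.proj 1

lemma left_fderiv (t : E2) (ht : t 0 < 0) :
    ∃ D : E2 →L[ℝ] E3, HasFDerivAt halfCuspidalEdge D t ∧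
      (∀ i, D (EuclideanSpace.single 0 1) i = ![1, 0, 0] i) ∧
      (∀ i, D (EuclideanSpace.single 1 1) i = ![0, 2 * t 1, 3 * (t 1) ^ 2] i) := by
  refine ⟨L3.comp (ContinuousLinearMap.pi
      ![(p0 : E2 →L[ℝ] ℝ), ((2 : ℕ) * t 1 ^ 1) • p1, ((3 : ℕ) * t 1 ^ 2) • p1]), ?_, ?_, ?_⟩
  · have hopen : IsOpen {s : E2 | s 0 < 0} :=
      isOpen_lt (EuclideanSpace.proj 0).continuous continuous_const
    have heq : halfCuspidalEdge =ᶠ[nhds t] fun s => L3 ![s 0, (s 1) ^ 2, (s 1) ^ 3] := by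
      filter_upwards [hopen.mem_nhds ht] with s hs
      have : flatPhi (s 0) = 0 := if_neg (not_lt.2 hs.le)
      simp only [halfCuspidalEdge, this, zero_mul, add_zero]; rfl
    refine HasFDerivAt.congr_of_eventuallyEq ?_ heq
    refine (L3.hasFDerivAt).comp t (hasFDerivAt_pi'' ?_)
    intro i
    fin_cases i
    · simp [ContinuousLinearMap.proj_pi]; exact p0.hasFDerivAt
    · simp [ContinuousLinearMap.proj_pi]; exact
        HasDerivAt.comp_hasFDerivAt (h₂ := fun x : ℝ => x ^ 2) t
          (by simpa using hasDerivAt_pow 2 (t 1)) p1.hasFDerivAt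
    · simp [ContinuousLinearMap.proj_pi]; exact
        (hasDerivAt_pow 3 (t 1)).comp_hasFDerivAt (h₂ := fun x : ℝ => x ^ 3) t p1.hasFDerivAt
  · intro i; fin_cases i <;>
      simp [L3, p0, p1, ContinuousLinearMap.pi_apply, EuclideanSpace.single_apply]
  · intro i; fin_cases i <;>
      simp [L3, p0, p1, ContinuousLinearMap.pi_apply, EuclideanSpace.single_apply]

lemma right_fderiv (t : E2) (ht : 0 < t 0) (ht1 : t 1 = 0) :
    ∃ D : E2 →L[ℝ] E3, HasFDerivAt halfCuspidalEdge D t ∧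
      (∀ i, D (EuclideanSpace.single 0 1) i = ![1, 0, 0] i) ∧
      (∀ i, D (EuclideanSpace.single 1 1) i = ![0, 0, Real.exp (-1 / (t 0) ^ 2)] i) := by
  have ha : t 0 ≠ 0 := ne_of_gt ht
  have hinner : HasDerivAt (fun x : ℝ => -1 / x ^ 2)
      ((0 * (t 0) ^ 2 - (-1) * (2 * (t 0) ^ 1)) / ((t 0) ^ 2) ^ 2) (t 0) :=
    (hasDerivAt_const _ (-1)).div (hasDerivAt_pow 2 (t 0)) (pow_ne_zero 2 ha)
  have hexp : HasDerivAt (fun x : ℝ => Real.exp (-1 / x ^ 2)) _ (t 0) := hinner.exp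
  have hu : HasFDerivAt (fun s : E2 => Real.exp (-1 / (s 0) ^ 2))
      ((Real.exp (-1 / (t 0) ^ 2) *
        ((0 * (t 0) ^ 2 - (-1) * (2 * (t 0) ^ 1)) / ((t 0) ^ 2) ^ 2)) • p0) t :=
    hexp.comp_hasFDerivAt (h₂ := fun x : ℝ => Real.exp (-1 / x ^ 2)) t p0.hasFDerivAt
  have hmul : HasFDerivAt (fun s : E2 => Real.exp (-1 / (s 0) ^ 2) * s 1)
      (Real.exp (-1 / (t 0) ^ 2) • (p1 : E2 →L[ℝ] ℝ) + (t 1) •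
        ((Real.exp (-1 / (t 0) ^ 2) *
          ((0 * (t 0) ^ 2 - (-1) * (2 * (t 0) ^ 1)) / ((t 0) ^ 2) ^ 2)) • p0)) t :=
    hu.mul p1.hasFDerivAt
  have hcomp2 : HasFDerivAt (fun s : E2 => (s 1) ^ 3 + Real.exp (-1 / (s 0) ^ 2) * s 1)
      ((((3 : ℕ) * t 1 ^ 2) • p1) + (Real.exp (-1 / (t 0) ^ 2) • (p1 : E2 →L[ℝ] ℝ) + (t 1) •
        ((Real.exp (-1 / (t 0) ^ 2) *
          ((0 * (t 0) ^ 2 - (-1) * (2 * (t 0) ^ 1)) / ((t 0) ^ 2) ^ 2)) • p0))) t :=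
    ((hasDerivAt_pow 3 (t 1)).comp_hasFDerivAt (h₂ := fun x : ℝ => x ^ 3) t p1.hasFDerivAt).add hmul
  refine ⟨L3.comp (ContinuousLinearMap.pi
      ![(p0 : E2 →L[ℝ] ℝ), ((2 : ℕ) * t 1 ^ 1) • p1,
        (((3 : ℕ) * t 1 ^ 2) • p1) + (Real.exp (-1 / (t 0) ^ 2) • (p1 : E2 →L[ℝ] ℝ) + (t 1) •
        ((Real.exp (-1 / (t 0) ^ 2) *
          ((0 * (t 0) ^ 2 - (-1) * (2 * (t 0) ^ 1)) / ((t 0) ^ 2) ^ 2)) • p0))]), ?_, ?_, ?_⟩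
  · have hopen : IsOpen {s : E2 | 0 < s 0} :=
      isOpen_lt continuous_const (EuclideanSpace.proj 0).continuous
    have heq : halfCuspidalEdge =ᶠ[nhds t]
        fun s => L3 ![s 0, (s 1) ^ 2, (s 1) ^ 3 + Real.exp (-1 / (s 0) ^ 2) * s 1] := by
      filter_upwards [hopen.mem_nhds ht] with s hs
      have : flatPhi (s 0) = Real.exp (-1 / (s 0) ^ 2) := if_pos hs
      simp only [halfCuspidalEdge, this]; rfl
    refine HasFDerivAt.congr_of_eventuallyEq ?_ heq
    refine (L3.hasFDerivAt).comp t (hasFDerivAt_pi'' ?_)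
    intro i
    fin_cases i
    · simp [ContinuousLinearMap.proj_pi]; exact p0.hasFDerivAt
    · simp [ContinuousLinearMap.proj_pi]; exact
        HasDerivAt.comp_hasFDerivAt (h₂ := fun x : ℝ => x ^ 2) t
          (by simpa using hasDerivAt_pow 2 (t 1)) p1.hasFDerivAt
    · simpa [ContinuousLinearMap.proj_pi] using hcomp2
  · intro i; fin_cases i <;>
      simp [L3, p0, p1, ContinuousLinearMap.pi_apply, EuclideanSpace.single_apply, ht1]
  · intro i; fin_cases i <;>
      simp [L3, p0, p1, ContinuousLinearMap.pi_apply, EuclideanSpace.single_apply, ht1]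

lemma span_dot (a b v : E3) (hv : v ∈ Submodule.span ℝ ({a, b} : Set E3)) :
    v 0 * (a 1 * b 2 - a 2 * b 1) + v 1 * (a 2 * b 0 - a 0 * b 2)
      + v 2 * (a 0 * b 1 - a 1 * b 0) = 0 := by
  rw [Submodule.mem_span_pair] at hv
  obtain ⟨c, d, rfl⟩ := hv
  have h : ∀ i, (c • a + d • b) i = c * a i + d * b i := fun i => by
    simp [PiLp.add_apply, PiLp.smul_apply]
  rw [h 0, h 1, h 2]; ring

lemma not_linIndep_of_minors (a b : E3)
    (h01 : a 0 * b 1 - a 1 * b 0 = 0) (h02 : a 0 * b 2 - a 2 * b 0 = 0)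
    (h12 : a 1 * b 2 - a 2 * b 1 = 0) : ¬ LinearIndependent ℝ ![a, b] := by
  rw [linearIndependent_fin2]
  rintro ⟨hb, hc⟩
  simp only [Matrix.cons_val_one, Matrix.head_cons, Matrix.cons_val_zero] at hb hc
  have hbne : ∃ i, b i ≠ 0 := by
    by_contra h; push_neg at h; exact hb (PiLp.ext fun i => by simp [h i])
  obtain ⟨i, hi⟩ := hbne
  refine hc (a i / b i) (PiLp.ext fun j => ?_)
  have happ : ((a i / b i) • b) j = a i / b i * b j := by simp [PiLp.smul_apply]
  rw [happ, div_mul_eq_mul_div, div_eq_iff hi]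
  fin_cases i <;> fin_cases j <;> simp <;> linarith

end FrontalAux

open FrontalAux Filter Topology

/-- The half cuspidal edge is not a frontal at the origin:
there do not exist an open neighbourhood `V` of `(0,0)` and smooth maps
`h₁, h₂ : V → ℝ³` which are linearly independent at every point of `V` and whose pointwise
span contains the range of the derivative of `halfCuspidalEdge` at every point of `V`.
(Example 2.1 of the paper.) -/
theorem halfCuspidalEdge_not_frontal_at_origin :
    ¬ ∃ (V : Set (EuclideanSpace ℝ (Fin 2)))
        (h₁ h₂ : EuclideanSpace ℝ (Fin 2) → EuclideanSpace ℝ (Fin 3)),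
      IsOpen V ∧ (0 : EuclideanSpace ℝ (Fin 2)) ∈ V ∧
      ContDiffOn ℝ (⊤ : ℕ∞) h₁ V ∧ ContDiffOn ℝ (⊤ : ℕ∞) h₂ V ∧
      (∀ t ∈ V, LinearIndependent ℝ ![h₁ t, h₂ t]) ∧
      (∀ t ∈ V, LinearMap.range (fderiv ℝ halfCuspidalEdge t :
          EuclideanSpace ℝ (Fin 2) →ₗ[ℝ] EuclideanSpace ℝ (Fin 3)) ≤
        Submodule.span ℝ {h₁ t, h₂ t}) := by
  rintro ⟨V, h₁, h₂, hV, h0V, hs1, hs2, hind, hspan⟩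
  -- the components of the "normal" cross product of the frame
  set n0 : E2 → ℝ := fun t => h₁ t 1 * h₂ t 2 - h₁ t 2 * h₂ t 1 with hn0def
  set n1 : E2 → ℝ := fun t => h₁ t 2 * h₂ t 0 - h₁ t 0 * h₂ t 2 with hn1def
  set n2 : E2 → ℝ := fun t => h₁ t 0 * h₂ t 1 - h₁ t 1 * h₂ t 0 with hn2def
  -- continuity at the origin
  have hc1 : ContinuousAt h₁ 0 := (hs1.continuousOn.continuousAt (hV.mem_nhds h0V))
  have hc2 : ContinuousAt h₂ 0 := (hs2.continuousOn.continuousAt (hV.mem_nhds h0V))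
  have hcomp1 : ∀ i : Fin 3, ContinuousAt (fun t => h₁ t i) 0 := fun i =>
    ((EuclideanSpace.proj i).continuous.continuousAt).comp hc1
  have hcomp2 : ∀ i : Fin 3, ContinuousAt (fun t => h₂ t i) 0 := fun i =>
    ((EuclideanSpace.proj i).continuous.continuousAt).comp hc2
  have hcn0 : ContinuousAt n0 0 := ((hcomp1 1).mul (hcomp2 2)).sub ((hcomp1 2).mul (hcomp2 1))
  have hcn1 : ContinuousAt n1 0 := ((hcomp1 2).mul (hcomp2 0)).sub ((hcomp1 0).mul (hcomp2 2))
  have hcn2 : ContinuousAt n2 0 := ((hcomp1 0).mul (hcomp2 1)).sub ((hcomp1 1).mul (hcomp2 0))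
  -- key relations on the left region
  have key_left : ∀ t ∈ V, t 0 < 0 →
      n0 t = 0 ∧ 2 * t 1 * n1 t + 3 * (t 1) ^ 2 * n2 t = 0 := by
    intro t htV ht
    obtain ⟨D, hD, hv0, hv1⟩ := left_fderiv t ht
    have hm0 : fderiv ℝ halfCuspidalEdge t (EuclideanSpace.single 0 1)
        ∈ Submodule.span ℝ ({h₁ t, h₂ t} : Set E3) := hspan t htV ⟨_, rfl⟩
    have hm1 : fderiv ℝ halfCuspidalEdge t (EuclideanSpace.single 1 1)
        ∈ Submodule.span ℝ ({h₁ t, h₂ t} : Set E3) := hspan t htV ⟨_, rfl⟩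
    rw [hD.fderiv] at hm0 hm1
    have e0 := span_dot _ _ _ hm0
    have e1 := span_dot _ _ _ hm1
    rw [hv0 0, hv0 1, hv0 2] at e0
    rw [hv1 0, hv1 1, hv1 2] at e1
    simp only [Matrix.cons_val_zero, Matrix.cons_val_one, Matrix.head_cons,
      Matrix.cons_val_two, Matrix.tail_cons] at e0 e1
    constructor
    · rw [hn0def]; dsimp only; linarith
    · rw [hn1def, hn2def]; dsimp only; ring_nf; ring_nf at e1; linarith
  -- key relation on the right half-axis
  have key_right : ∀ t ∈ V, 0 < t 0 → t 1 = 0 → n2 t = 0 := by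
    intro t htV ht ht1
    obtain ⟨D, hD, hv0, hv1⟩ := right_fderiv t ht ht1
    have hm1 : fderiv ℝ halfCuspidalEdge t (EuclideanSpace.single 1 1)
        ∈ Submodule.span ℝ ({h₁ t, h₂ t} : Set E3) := hspan t htV ⟨_, rfl⟩
    rw [hD.fderiv] at hm1
    have e1 := span_dot _ _ _ hm1
    rw [hv1 0, hv1 1, hv1 2] at e1
    simp only [Matrix.cons_val_zero, Matrix.cons_val_one, Matrix.head_cons,
      Matrix.cons_val_two, Matrix.tail_cons, zero_mul, zero_add] at e1
    have hexp : Real.exp (-1 / (t 0) ^ 2) ≠ 0 := Real.exp_ne_zero _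
    rw [hn2def]; dsimp only
    exact (mul_eq_zero.1 e1).resolve_left hexp
  -- the left path  s ↦ (-s, s)
  set ps : ℝ → E2 := fun s => (EuclideanSpace.equiv (Fin 2) ℝ).symm ![-s, s] with hpsdef
  have hps0 : ps 0 = 0 := by
    ext i; fin_cases i <;> simp [hpsdef]
  have hpscont : Continuous ps := by
    refine ((EuclideanSpace.equiv (Fin 2) ℝ).symm.continuous).comp ?_
    refine continuous_pi fun i => ?_
    fin_cases i
    · exact continuous_neg
    · exact continuous_id
  have hpstend : Tendsto ps (𝓝[>] (0 : ℝ)) (𝓝 (0 : E2)) := by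
    have := hpscont.tendsto 0
    rw [hps0] at this
    exact this.mono_left nhdsWithin_le_nhds
  have hps0' : ∀ s : ℝ, ps s 0 = -s := fun s => rfl
  have hps1' : ∀ s : ℝ, ps s 1 = s := fun s => rfl
  -- the right path  s ↦ (s, 0)
  set qs : ℝ → E2 := fun s => (EuclideanSpace.equiv (Fin 2) ℝ).symm ![s, 0] with hqsdef
  have hqs0 : qs 0 = 0 := by
    ext i; fin_cases i <;> simp [hqsdef]
  have hqscont : Continuous qs := by
    refine ((EuclideanSpace.equiv (Fin 2) ℝ).symm.continuous).comp ?_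
    refine continuous_pi fun i => ?_
    fin_cases i
    · exact continuous_id
    · exact continuous_const
  have hqstend : Tendsto qs (𝓝[>] (0 : ℝ)) (𝓝 (0 : E2)) := by
    have := hqscont.tendsto 0
    rw [hqs0] at this
    exact this.mono_left nhdsWithin_le_nhds
  have hqs0' : ∀ s : ℝ, qs s 0 = s := fun s => rfl
  have hqs1' : ∀ s : ℝ, qs s 1 = 0 := fun s => rfl
  -- eventual membership in V
  have hpsV : ∀ᶠ s in 𝓝[>] (0 : ℝ), ps s ∈ V := hpstend (hV.mem_nhds h0V)
  have hqsV : ∀ᶠ s in 𝓝[>] (0 : ℝ), qs s ∈ V := hqstend (hV.mem_nhds h0V)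
  have hpos : ∀ᶠ s in 𝓝[>] (0 : ℝ), (0 : ℝ) < s := self_mem_nhdsWithin
  -- limit along the left path gives n0 0 = 0 and n1 0 = 0
  have hev0 : ∀ᶠ s in 𝓝[>] (0 : ℝ), n0 (ps s) = 0 := by
    filter_upwards [hpsV, hpos] with s hsV hs
    exact (key_left (ps s) hsV (by rw [hps0']; linarith)).1
  have hev1 : ∀ᶠ s in 𝓝[>] (0 : ℝ), 2 * n1 (ps s) + 3 * s * n2 (ps s) = 0 := by
    filter_upwards [hpsV, hpos] with s hsV hs
    have h := (key_left (ps s) hsV (by rw [hps0']; linarith)).2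
    rw [hps1'] at h
    have hs' : s ≠ 0 := ne_of_gt hs
    field_simp at h ⊢
    nlinarith [h]
  have hn0_0 : n0 0 = 0 := by
    have htd : Tendsto (fun s => n0 (ps s)) (𝓝[>] (0 : ℝ)) (𝓝 (n0 0)) := by
      have := hcn0.tendsto.comp hpstend
      exact this
    have htd0 : Tendsto (fun s => n0 (ps s)) (𝓝[>] (0 : ℝ)) (𝓝 0) :=
      Tendsto.congr' (hev0.mono fun s hs => hs.symm) tendsto_const_nhds
    exact tendsto_nhds_unique htd htd0
  have hn1_0 : n1 0 = 0 := by
    have htd : Tendsto (fun s => 2 * n1 (ps s) + 3 * s * n2 (ps s)) (𝓝[>] (0 : ℝ))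
        (𝓝 (2 * n1 0 + 3 * 0 * n2 0)) := by
      refine Tendsto.add (Tendsto.const_mul _ (hcn1.tendsto.comp hpstend)) ?_
      exact Tendsto.mul (Tendsto.const_mul _ (tendsto_id.mono_left nhdsWithin_le_nhds))
        (hcn2.tendsto.comp hpstend)
    have htd0 : Tendsto (fun s => 2 * n1 (ps s) + 3 * s * n2 (ps s)) (𝓝[>] (0 : ℝ)) (𝓝 0) :=
      Tendsto.congr' (hev1.mono fun s hs => hs.symm) tendsto_const_nhds
    have := tendsto_nhds_unique htd htd0
    linarith
  -- limit along the right path gives n2 0 = 0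
  have hev2 : ∀ᶠ s in 𝓝[>] (0 : ℝ), n2 (qs s) = 0 := by
    filter_upwards [hqsV, hpos] with s hsV hs
    exact key_right (qs s) hsV (by rw [hqs0']; exact hs) (hqs1' s)
  have hn2_0 : n2 0 = 0 := by
    have htd : Tendsto (fun s => n2 (qs s)) (𝓝[>] (0 : ℝ)) (𝓝 (n2 0)) := by
      have := hcn2.tendsto.comp hqstend
      exact this
    have htd0 : Tendsto (fun s => n2 (qs s)) (𝓝[>] (0 : ℝ)) (𝓝 0) :=
      Tendsto.congr' (hev2.mono fun s hs => hs.symm) tendsto_const_nhds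
    exact tendsto_nhds_unique htd htd0
  -- contradiction with linear independence at the origin
  refine not_linIndep_of_minors (h₁ 0) (h₂ 0) ?_ ?_ ?_ (hind 0 h0V)
  · simpa [hn2def] using hn2_0
  · have := hn1_0; rw [hn1def] at this; dsimp only at this; linarith
  · simpa [hn0def] using hn0_0
end
end
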